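/- arXiv:2307.08395 — 7 statements merged into one kernel-verified Lean document; each statement's English description precedes it below -/
import Mathlib

section
/- Let j be a positive natural number. Define f : ℤ → ℝ by f(j−2n) = (∏_{k=1}^{n} (−1)/(−4kj+4k²−2k)) · √((2j)!·(2n)!/(2j−2n)!) for 0 ≤ n ≤ j, and f(m) = 0 for every other integer m (in particular when j−m is odd or |m| > j). Then for every integer m with −j ≤ m ≤ j one has √((m+j+1)(j−m)) · f(m+1) = √((m+j)(j−m+1)) · f(m−1). -/
/-- The finite-dimensional Ishibashi cap state solves the cap-state condition
`(J₁ + J₋₁)|a⟩ = 0` in components. -/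
theorem stmt_1 (j : ℕ) (hj : 0 < j) (f : ℤ → ℝ)
    (hdef : ∀ n : ℕ, n ≤ j →
      f ((j : ℤ) - 2 * n) =
        (∏ k ∈ Finset.Icc 1 n, (-1 : ℝ) / (-4 * k * j + 4 * (k : ℝ) ^ 2 - 2 * k)) *
          Real.sqrt (((Nat.factorial (2 * j)) * (Nat.factorial (2 * n)) : ℝ) /
            (Nat.factorial (2 * j - 2 * n))))
    (hzero : ∀ m : ℤ, (∀ n : ℕ, n ≤ j → m ≠ (j : ℤ) - 2 * n) → f m = 0) :
    ∀ m : ℤ, -(j : ℤ) ≤ m → m ≤ j →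
      Real.sqrt (((m : ℝ) + j + 1) * ((j : ℝ) - m)) * f (m + 1) =
        Real.sqrt (((m : ℝ) + j) * ((j : ℝ) - m + 1)) * f (m - 1) := by
  intro m hm1 hm2
  rcases Int.even_or_odd ((j : ℤ) - m) with he | ho
  · -- j - m even: both f (m+1) and f (m-1) vanish
    obtain ⟨r, hr⟩ := he
    rw [hzero (m + 1) (by intro n hn h; omega), hzero (m - 1) (by intro n hn h; omega)]
    simp
  · -- j - m odd
    obtain ⟨r, hr⟩ := ho
    have hr0 : 0 ≤ r := by omega
    set n : ℕ := r.toNat with hn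
    have hnr : (n : ℤ) = r := Int.toNat_of_nonneg hr0
    have hnj : n + 1 ≤ j := by omega
    have hme : m = (j : ℤ) - 2 * n - 1 := by omega
    have e1 : m + 1 = (j : ℤ) - 2 * n := by omega
    have e2 : m - 1 = (j : ℤ) - 2 * ((n : ℕ) + 1 : ℕ) := by push_cast; omega
    rw [e1, e2, hdef n (by omega), hdef (n + 1) (by omega)]
    -- notation
    set a : ℕ := j - (n + 1) with haa
    have hja : j = n + 1 + a := by omega
    have f1 : 2 * j - 2 * n = 2 * a + 2 := by omega
    have f2 : 2 * j - 2 * (n + 1) = 2 * a := by omega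
    have f3 : 2 * (n + 1) = 2 * n + 2 := by ring
    rw [f1, f2, f3]
    -- split product at top
    rw [Finset.prod_Icc_succ_top (Nat.le_add_left 1 n)]
    push_cast
    set P : ℝ := ∏ k ∈ Finset.Icc 1 n, (-1 : ℝ) / (-4 * k * j + 4 * (k : ℝ) ^ 2 - 2 * k) with hP
    set c : ℝ := (-1 : ℝ) / (-4 * ((n : ℝ) + 1) * j + 4 * ((n : ℝ) + 1) ^ 2 - 2 * ((n : ℝ) + 1)) with hc
    have hjr' : (j : ℝ) = (n : ℝ) + 1 + a := by exact_mod_cast congrArg (Nat.cast : ℕ → ℝ) hja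
    have hcval : c = 1 / (2 * ((n : ℝ) + 1) * (2 * (a : ℝ) + 1)) := by
      rw [hc, hjr', show (-4 * ((n : ℝ) + 1) * ((n : ℝ) + 1 + a) + 4 * ((n : ℝ) + 1) ^ 2
          - 2 * ((n : ℝ) + 1)) = -(2 * ((n : ℝ) + 1) * (2 * (a : ℝ) + 1)) from by ring,
        neg_div_neg_eq]
    have hcnn : 0 ≤ c := by rw [hcval]; positivity
    have hmr : (m : ℝ) = (j : ℝ) - 2 * n - 1 := by exact_mod_cast congrArg (Int.cast : ℤ → ℝ) hme
    have hjr : (j : ℝ) = (n : ℝ) + 1 + a := by exact_mod_cast congrArg (Nat.cast : ℕ → ℝ) hja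
    -- nonneg facts
    have hA : (0 : ℝ) ≤ ((m : ℝ) + j + 1) * ((j : ℝ) - m) := by
      rw [hmr, hjr]
      have h1 : (0 : ℝ) ≤ (n : ℝ) := Nat.cast_nonneg n
      have h2 : (0 : ℝ) ≤ (a : ℝ) := Nat.cast_nonneg a
      nlinarith
    have hA' : (0 : ℝ) ≤ ((m : ℝ) + j) * ((j : ℝ) - m + 1) := by
      rw [hmr, hjr]
      have h1 : (0 : ℝ) ≤ (n : ℝ) := Nat.cast_nonneg n
      have h2 : (0 : ℝ) ≤ (a : ℝ) := Nat.cast_nonneg a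
      nlinarith
    have key : Real.sqrt (((m : ℝ) + j + 1) * ((j : ℝ) - m)) *
          Real.sqrt (((Nat.factorial (2 * j)) * (Nat.factorial (2 * n)) : ℝ) /
            (Nat.factorial (2 * a + 2))) =
        Real.sqrt (((m : ℝ) + j) * ((j : ℝ) - m + 1)) * c *
          Real.sqrt (((Nat.factorial (2 * j)) * (Nat.factorial (2 * n + 2)) : ℝ) /
            (Nat.factorial (2 * a))) := by
      rw [← Real.sqrt_sq hcnn, ← Real.sqrt_mul hA', ← Real.sqrt_mul (mul_nonneg hA' (sq_nonneg c)),
        ← Real.sqrt_mul hA]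
      congr 1
      have g1 : ((Nat.factorial (2 * n + 2)) : ℝ)
          = (2 * (n : ℝ) + 2) * (2 * (n : ℝ) + 1) * (Nat.factorial (2 * n)) := by
        rw [show 2 * n + 2 = (2 * n + 1) + 1 from rfl, Nat.factorial_succ, Nat.factorial_succ]
        push_cast; ring
      have g2 : ((Nat.factorial (2 * a + 2)) : ℝ)
          = (2 * (a : ℝ) + 2) * (2 * (a : ℝ) + 1) * (Nat.factorial (2 * a)) := by
        rw [show 2 * a + 2 = (2 * a + 1) + 1 from rfl, Nat.factorial_succ, Nat.factorial_succ]
        push_cast; ring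
      have hfa : ((Nat.factorial (2 * a)) : ℝ) ≠ 0 := by
        exact_mod_cast Nat.factorial_ne_zero (2 * a)
      have hd1 : (2 * (a : ℝ) + 2) ≠ 0 := by positivity
      have hd2 : (2 * (a : ℝ) + 1) ≠ 0 := by positivity
      have hd3 : (2 * ((n : ℝ) + 1) * (2 * a + 1)) ≠ 0 := by positivity
      rw [hmr, hjr, hcval, g1, g2]
      field_simp
      ring
    linear_combination P * key
end

section
/- Let j ∈ ℂ with 2j ∉ ℤ and let n ∈ ℕ. Then ∏_{k=1}^{n} 1/(−4kj+4k²−2k) = [Γ(−2j)/(Γ(2n+1)·Γ(2n−2j))] · [Γ(j+1)/Γ(j−2n+1)] · ∑_{t=0}^{2n} ((−2n)_t (−j)_t / ((j−2n+1)_t · t!)) (−1)^t. -/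
open Finset Polynomial

/-- Ascending Pochhammer symbol `(a)_k = a (a+1) ⋯ (a+k-1)`. -/
noncomputable def pochC (a : ℂ) (k : ℕ) : ℂ := ∏ i ∈ Finset.range k, (a + i)

/- ### Auxiliary lemmas -/

private lemma expand_one_sub_X_pow (M : ℕ) :
    (1 - X : ℤ[X]) ^ M = ∑ i ∈ range (M+1), C ((-1:ℤ)^i * M.choose i) * X ^ i := by
  rw [sub_eq_add_neg, add_comm, add_pow]
  refine Finset.sum_congr rfl fun i hi => ?_
  rw [neg_pow]
  simp [C_mul, mul_comm, mul_assoc, mul_left_comm]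

private lemma coeff_one_sub_X_pow (M k : ℕ) :
    ((1 - X : ℤ[X]) ^ M).coeff k = (-1:ℤ)^k * M.choose k := by
  rw [expand_one_sub_X_pow, finset_sum_coeff]
  simp only [coeff_C_mul, coeff_X_pow]
  rw [Finset.sum_eq_single k]
  · simp
  · intro b _ hbk
    simp only [mul_ite, mul_one, mul_zero, ite_eq_right_iff]
    intro h; exact absurd h.symm hbk
  · intro hk
    simp only [Finset.mem_range, not_lt] at hk
    rw [Nat.choose_eq_zero_of_lt hk]
    simp

private lemma coeff_one_sub_X_sq_pow (M n : ℕ) :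
    ((1 - X^2 : ℤ[X]) ^ M).coeff (2*n) = (-1:ℤ)^n * M.choose n := by
  have h : (1 - X^2 : ℤ[X]) ^ M = ∑ i ∈ range (M+1), C ((-1:ℤ)^i * M.choose i) * X ^ (2*i) := by
    rw [sub_eq_add_neg, add_comm, add_pow]
    refine Finset.sum_congr rfl fun i hi => ?_
    rw [neg_pow, ← pow_mul]
    simp [C_mul, mul_comm, mul_assoc, mul_left_comm]
  rw [h, finset_sum_coeff]
  simp only [coeff_C_mul, coeff_X_pow]
  rw [Finset.sum_eq_single n]
  · simp
  · intro b _ hbk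
    simp only [mul_ite, mul_one, mul_zero, ite_eq_right_iff]
    intro h; omega
  · intro hk
    simp only [Finset.mem_range, not_lt] at hk
    rw [Nat.choose_eq_zero_of_lt hk]
    simp

private lemma key_int (M n : ℕ) :
    ∑ t ∈ range (2*n+1), (-1:ℤ)^t * M.choose t * M.choose (2*n - t)
      = (-1:ℤ)^n * M.choose n := by
  have hpoly : ((1 - X : ℤ[X]))^M * ((1 + X : ℤ[X]))^M = (1 - X^2 : ℤ[X])^M := by
    rw [← mul_pow]; ring_nf
  have h2 := congrArg (fun p : ℤ[X] => p.coeff (2*n)) hpoly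
  simp only [coeff_mul] at h2
  rw [Finset.Nat.sum_antidiagonal_eq_sum_range_succ_mk] at h2
  rw [coeff_one_sub_X_sq_pow] at h2
  rw [← h2]
  refine Finset.sum_congr rfl fun t ht => ?_
  simp only [coeff_one_sub_X_pow, coeff_one_add_X_pow]

private lemma dP_eval (t : ℕ) (j : ℂ) :
    (descPochhammer ℂ t).eval j = ∏ i ∈ range t, (j - i) := by
  induction t with
  | zero => simp
  | succ t ih => rw [descPochhammer_succ_eval, ih, Finset.prod_range_succ]

private lemma key_complex (n : ℕ) (j : ℂ) :
    ∑ t ∈ range (2*n+1), (-1:ℂ)^t * ((2*n).choose t : ℂ) *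
        ((∏ i ∈ range t, (j - i)) * ∏ i ∈ range (2*n - t), (j - i))
      = (-1:ℂ)^n * ((2*n).factorial / n.factorial : ℂ) * ∏ i ∈ range n, (j - i) := by
  set p : ℂ[X] := ∑ t ∈ range (2*n+1),
      C ((-1:ℂ)^t * ((2*n).choose t : ℂ)) * (descPochhammer ℂ t * descPochhammer ℂ (2*n - t))
    with hp
  set q : ℂ[X] := C ((-1:ℂ)^n * ((2*n).factorial / n.factorial : ℂ)) * descPochhammer ℂ n
    with hq
  have hpq : p = q := by
    apply eq_of_infinite_eval_eq
    apply Set.Infinite.mono (s := Set.range (fun M : ℕ => (M : ℂ)))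
    · rintro _ ⟨M, rfl⟩
      show (fun x => p.eval x = q.eval x) ((M : ℕ) : ℂ)
      show p.eval ((M : ℕ) : ℂ) = q.eval ((M : ℕ) : ℂ)
      rw [hp, hq]
      simp only [eval_finset_sum, eval_mul, eval_C, descPochhammer_eval_eq_descFactorial]
      have hfac : ∀ t ∈ range (2*n+1),
          (-1:ℂ)^t * ((2*n).choose t : ℂ) * ((M.descFactorial t : ℂ) * (M.descFactorial (2*n-t) : ℂ))
            = ((2*n).factorial : ℂ) * ((-1:ℂ)^t * (M.choose t : ℂ) * (M.choose (2*n-t) : ℂ)) := by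
        intro t ht
        simp only [Finset.mem_range] at ht
        have ht' : t ≤ 2*n := by omega
        rw [Nat.descFactorial_eq_factorial_mul_choose, Nat.descFactorial_eq_factorial_mul_choose]
        have hcmm : ((2*n).choose t : ℂ) * (t.factorial : ℂ) * ((2*n-t).factorial : ℂ)
            = ((2*n).factorial : ℂ) := by
          rw [← Nat.cast_mul, ← Nat.cast_mul, Nat.choose_mul_factorial_mul_factorial ht']
        push_cast
        linear_combination ((-1:ℂ)^t * (M.choose t : ℂ) * (M.choose (2*n-t) : ℂ)) * hcmm
      rw [Finset.sum_congr rfl hfac, ← Finset.mul_sum]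
      have hkey : ∑ t ∈ range (2*n+1), ((-1:ℂ)^t * (M.choose t : ℂ) * (M.choose (2*n-t) : ℂ))
          = (-1:ℂ)^n * (M.choose n : ℂ) := by exact_mod_cast key_int M n
      rw [hkey, Nat.descFactorial_eq_factorial_mul_choose]
      have hnfac : (n.factorial : ℂ) ≠ 0 := Nat.cast_ne_zero.mpr n.factorial_ne_zero
      push_cast
      field_simp
    · apply Set.infinite_range_of_injective
      exact fun a b hab => Nat.cast_injective hab
  have := congrArg (fun r : ℂ[X] => r.eval j) hpq
  rw [hp, hq] at this
  simpa only [eval_finset_sum, eval_mul, eval_C, dP_eval] using this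

private lemma Gamma_add_nat (z : ℂ) (N : ℕ) (h : ∀ i : ℕ, i < N → z + i ≠ 0) :
    Complex.Gamma (z + N) = Complex.Gamma z * ∏ i ∈ range N, (z + i) := by
  induction N with
  | zero => simp
  | succ N ih =>
    have h1 : z + ((N+1 : ℕ) : ℂ) = (z + N) + 1 := by push_cast; ring
    rw [h1, Complex.Gamma_add_one _ (h N (by omega)),
      ih (fun i hi => h i (by omega)), prod_range_succ]
    ring

private lemma pochC_neg (a : ℂ) (t : ℕ) :
    pochC (-a) t = (-1:ℂ)^t * ∏ i ∈ range t, (a - i) := by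
  rw [pochC]
  have h : ∀ i ∈ range t, (-a + (i:ℂ)) = (-1) * (a - i) := fun i _ => by ring
  rw [Finset.prod_congr rfl h, Finset.prod_mul_distrib, Finset.prod_const, Finset.card_range]

private lemma pochC_neg_nat (M t : ℕ) :
    pochC (-(M:ℂ)) t = (-1:ℂ)^t * (M.descFactorial t : ℂ) := by
  rw [pochC_neg, ← dP_eval, descPochhammer_eval_eq_descFactorial]

private lemma poch_shift (j : ℂ) (s t : ℕ) :
    (∏ i ∈ range s, (j - i)) * pochC (j - (s:ℂ) - (t:ℂ) + 1) t
      = ∏ i ∈ range (s + t), (j - i) := by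
  rw [Finset.prod_range_add]
  congr 1
  rw [pochC, ← Finset.prod_range_reflect]
  refine Finset.prod_congr rfl fun i hi => ?_
  simp only [Finset.mem_range] at hi
  have h1 : (t - 1 - i : ℕ) = t - (i+1) := by omega
  have h2 : ((t - (i+1) : ℕ) : ℂ) = (t:ℂ) - (i+1) := by
    rw [Nat.cast_sub (by omega)]; push_cast; ring
  rw [h1, h2]
  push_cast
  ring

private lemma sum_closed (j : ℂ) (hjZ : ∀ m : ℤ, j ≠ (m:ℂ)) (n : ℕ) :
    (∑ t ∈ range (2*n+1), pochC (-2*(n:ℂ)) t * pochC (-j) t /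
        (pochC (j - 2*(n:ℂ) + 1) t * (t.factorial : ℂ)) * (-1)^t) *
      (∏ i ∈ range (2*n), (j - i))
      = (-1:ℂ)^n * ((2*n).factorial / n.factorial : ℂ) * ∏ i ∈ range n, (j - i) := by
  rw [Finset.sum_mul, ← key_complex n j]
  refine Finset.sum_congr rfl fun t ht => ?_
  simp only [Finset.mem_range] at ht
  have ht' : t ≤ 2*n := by omega
  have e1 : pochC (-2*(n:ℂ)) t = (-1:ℂ)^t * ((t.factorial : ℂ) * ((2*n).choose t : ℂ)) := by
    have : (-2*(n:ℂ)) = -(((2*n : ℕ):ℂ)) := by push_cast; ring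
    rw [this, pochC_neg_nat, Nat.descFactorial_eq_factorial_mul_choose]
    push_cast; ring
  have e2 : pochC (-j) t = (-1:ℂ)^t * ∏ i ∈ range t, (j - i) := pochC_neg j t
  have hcast : j - 2*(n:ℂ) + 1 = j - ((2*n - t : ℕ):ℂ) - (t:ℂ) + 1 := by
    rw [Nat.cast_sub ht']; push_cast; ring
  have e3 : (∏ i ∈ range (2*n - t), (j - i)) * pochC (j - 2*(n:ℂ) + 1) t
      = ∏ i ∈ range (2*n), (j - i) := by
    rw [hcast, poch_shift, show 2*n - t + t = 2*n from by omega]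
  have hD : pochC (j - 2*(n:ℂ) + 1) t ≠ 0 := by
    rw [pochC]
    refine Finset.prod_ne_zero_iff.mpr fun i hi => ?_
    simp only [Finset.mem_range] at hi
    intro h
    exact hjZ (2*(n:ℤ) - 1 - i) (by push_cast; linear_combination h)
  have hfac : (t.factorial : ℂ) ≠ 0 := Nat.cast_ne_zero.mpr t.factorial_ne_zero
  rw [e1, e2, ← e3]
  field_simp
  have sq : ((-1:ℂ)^t) ^ 2 = 1 := by rw [← pow_mul, mul_comm, pow_mul]; norm_num
  linear_combination (((2*n).choose t : ℂ) * (∏ i ∈ range t, (j - (i:ℂ))) *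
    (∏ i ∈ range (2*n - t), (j - (i:ℂ)))) * sq

private lemma lhs_prod (j : ℂ) (hj : ∀ m : ℤ, 2 * j ≠ (m : ℂ)) (n : ℕ) :
    (∏ k ∈ Finset.Icc 1 n, 1 / (-4 * (k:ℂ) * j + 4 * (k:ℂ)^2 - 2*(k:ℂ))) *
      ((n.factorial : ℂ) * ∏ i ∈ range (2*n), (-2*j + i))
      = (-1:ℂ)^n * ∏ i ∈ range n, (j - i) := by
  induction n with
  | zero => simp
  | succ n ih =>
    rw [Finset.prod_Icc_succ_top (by omega : 1 ≤ n+1),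
      show 2*(n+1) = 2*n+1+1 from by ring, prod_range_succ, prod_range_succ,
      prod_range_succ, Nat.factorial_succ]
    push_cast
    have hden : (-4 * ((n:ℂ)+1) * j + 4 * ((n:ℂ)+1)^2 - 2*((n:ℂ)+1)) ≠ 0 := by
      intro h
      have hfac : (-2*((n:ℂ)+1)) * (2*j - (2*(n:ℂ)+1)) = 0 := by linear_combination h
      rcases mul_eq_zero.mp hfac with h1 | h1
      · exact (mul_ne_zero (by norm_num : (-2:ℂ) ≠ 0) (Nat.cast_add_one_ne_zero n)) h1
      · exact hj (2*(n:ℤ)+1) (by push_cast; linear_combination h1)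
    have key : (1 / (-4 * ((n:ℂ)+1) * j + 4 * ((n:ℂ)+1)^2 - 2*((n:ℂ)+1))) *
        (((n:ℂ)+1) * ((-2*j + 2*(n:ℂ)) * (-2*j + (2*(n:ℂ)+1)))) = -(j - (n:ℂ)) := by
      rw [div_mul_eq_mul_div, one_mul, div_eq_iff hden]
      ring
    linear_combination ((∏ k ∈ Finset.Icc 1 n, 1 / (-4 * (k:ℂ) * j + 4 * (k:ℂ)^2 - 2*(k:ℂ))) *
        (n.factorial : ℂ) * (∏ i ∈ range (2*n), (-2*j + (i:ℂ)))) * key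
      + (-(j - (n:ℂ))) * ih

/-- Hypergeometric rewriting of the Ishibashi cap-state coefficients (eq. (B.4)). -/
theorem stmt_3 (j : ℂ) (hj : ∀ m : ℤ, 2 * j ≠ (m : ℂ)) (n : ℕ) :
    ∏ k ∈ Finset.Icc 1 n, 1 / (-4 * (k : ℂ) * j + 4 * (k : ℂ) ^ 2 - 2 * k) =
      Complex.Gamma (-2 * j) /
          (Complex.Gamma (2 * n + 1) * Complex.Gamma (2 * (n : ℂ) - 2 * j)) *
        (Complex.Gamma (j + 1) / Complex.Gamma (j - 2 * n + 1)) *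
        ∑ t ∈ Finset.range (2 * n + 1),
          pochC (-2 * (n : ℂ)) t * pochC (-j) t /
              (pochC (j - 2 * n + 1) t * (Nat.factorial t : ℂ)) * (-1) ^ t := by
  have hjZ : ∀ m : ℤ, j ≠ (m:ℂ) := fun m h => hj (2*m) (by rw [h]; push_cast; ring)
  set S := ∑ t ∈ Finset.range (2 * n + 1),
      pochC (-2 * (n : ℂ)) t * pochC (-j) t /
        (pochC (j - 2 * n + 1) t * (Nat.factorial t : ℂ)) * (-1) ^ t with hSdef
  set P := ∏ i ∈ Finset.range (2*n), (j - (i:ℂ)) with hPdef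
  set Q := ∏ i ∈ Finset.range (2*n), (-2*j + (i:ℂ)) with hQdef
  set An := ∏ i ∈ Finset.range n, (j - (i:ℂ)) with hAdef
  -- nonvanishing
  have hGden : ∀ i : ℕ, -2*j + (i:ℂ) ≠ 0 := by
    intro i h; exact hj i (by push_cast; linear_combination -h)
  have hzi : ∀ i : ℕ, (j - 2*(n:ℂ) + 1) + (i:ℂ) ≠ 0 := by
    intro i h
    exact hjZ (2*(n:ℤ) - 1 - i) (by push_cast; linear_combination h)
  have hQnz : Q ≠ 0 :=
    Finset.prod_ne_zero_iff.mpr fun i _ => hGden i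
  have hPnz : P ≠ 0 := by
    refine Finset.prod_ne_zero_iff.mpr fun i _ => ?_
    intro h; exact hjZ i (by push_cast; linear_combination h)
  have hfacn : (n.factorial : ℂ) ≠ 0 := Nat.cast_ne_zero.mpr n.factorial_ne_zero
  have hfac2n : ((2*n).factorial : ℂ) ≠ 0 := Nat.cast_ne_zero.mpr (2*n).factorial_ne_zero
  have hΓ1 : Complex.Gamma (-2*j) ≠ 0 :=
    Complex.Gamma_ne_zero fun m h => hj (m:ℤ) (by push_cast; linear_combination -h)
  have hΓ2 : Complex.Gamma (j - 2*(n:ℂ) + 1) ≠ 0 :=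
    Complex.Gamma_ne_zero fun m h => hjZ (2*(n:ℤ) - 1 - m) (by push_cast; linear_combination h)
  -- Gamma identities
  have hG1 : Complex.Gamma (2*(n:ℂ) - 2*j) = Complex.Gamma (-2*j) * Q := by
    have harg : 2*(n:ℂ) - 2*j = (-2*j) + ((2*n:ℕ):ℂ) := by push_cast; ring
    rw [harg, Gamma_add_nat _ _ (fun i _ => hGden i)]
  have hG2 : Complex.Gamma (j + 1)
      = Complex.Gamma (j - 2*(n:ℂ) + 1) * ∏ i ∈ Finset.range (2*n), ((j - 2*(n:ℂ) + 1) + (i:ℂ)) := by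
    have harg : j + 1 = (j - 2*(n:ℂ) + 1) + ((2*n:ℕ):ℂ) := by push_cast; ring
    rw [harg, Gamma_add_nat _ _ (fun i _ => hzi i)]
  have hprodP : (∏ i ∈ Finset.range (2*n), ((j - 2*(n:ℂ) + 1) + (i:ℂ))) = P := by
    have hrefl := Finset.prod_range_reflect (fun i => j - (i:ℂ)) (2*n)
    rw [hPdef, ← hrefl]
    refine Finset.prod_congr rfl fun i hi => ?_
    simp only [Finset.mem_range] at hi
    have h1 : (2*n - 1 - i : ℕ) = 2*n - (i+1) := by omega
    have h2 : ((2*n - (i+1) : ℕ):ℂ) = 2*(n:ℂ) - ((i:ℂ)+1) := by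
      rw [Nat.cast_sub (by omega)]; push_cast; ring
    simp only [h1, h2]
    ring
  have hG3 : Complex.Gamma (2*(n:ℂ) + 1) = ((2*n).factorial : ℂ) := by
    rw [show 2*(n:ℂ)+1 = ((2*n:ℕ):ℂ)+1 from by push_cast; ring,
      Complex.Gamma_nat_eq_factorial]
  -- closed forms
  have hsum : S * P = (-1:ℂ)^n * ((2*n).factorial / n.factorial : ℂ) * An := by
    rw [hSdef, hPdef, hAdef]
    exact sum_closed j hjZ n
  have hlhs : (∏ k ∈ Finset.Icc 1 n, 1 / (-4 * (k:ℂ) * j + 4 * (k:ℂ)^2 - 2*(k:ℂ))) *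
      ((n.factorial : ℂ) * Q) = (-1:ℂ)^n * An := by
    rw [hQdef, hAdef]
    exact lhs_prod j hj n
  -- assemble
  have hS : S = ((-1:ℂ)^n * ((2*n).factorial / n.factorial : ℂ) * An) / P :=
    (eq_div_iff hPnz).mpr hsum
  have hL : (∏ k ∈ Finset.Icc 1 n, 1 / (-4 * (k:ℂ) * j + 4 * (k:ℂ)^2 - 2*(k:ℂ)))
      = ((-1:ℂ)^n * An) / ((n.factorial : ℂ) * Q) :=
    (eq_div_iff (mul_ne_zero hfacn hQnz)).mpr hlhs
  have hS2 : S = ((-1:ℂ)^n * ((2*n).factorial:ℂ) * An) / ((n.factorial : ℂ) * P) := by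
    rw [hS, div_eq_div_iff hPnz (mul_ne_zero hfacn hPnz)]
    field_simp
  have hBnz : (((2*n).factorial : ℂ) * (Complex.Gamma (-2*j) * Q)) * Complex.Gamma (j - 2*(n:ℂ) + 1)
      * ((n.factorial : ℂ) * P) ≠ 0 := by
    exact mul_ne_zero (mul_ne_zero (mul_ne_zero hfac2n (mul_ne_zero hΓ1 hQnz)) hΓ2)
      (mul_ne_zero hfacn hPnz)
  rw [hG1, hG2, hprodP, hG3, hL, hS2, div_mul_div_comm, div_mul_div_comm,
    div_eq_div_iff (mul_ne_zero hfacn hQnz) hBnz]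
  ring
end

section
/- Let j ∈ ℝ with 2j ∉ ℤ and let p ∈ ℕ. Define a : ℕ → ℂ by a(n) := S(n) / (Γ(j−n+1) · Γ(n−p+1)), where S(n) := ∑_{t=0}^{n} ((−n)_t (−j)_t / ((j−n+1)_t · t!)) (−1)^t. Then the radius of convergence of the power series ∑_{n} a(n) qⁿ equals 1; equivalently, limsup_{n→∞} |a(n)|^{1/n} = 1. -/
/-- `S n = ₂F₁(-n, -j; j-n+1 | -1)` (terminating). -/
noncomputable def S (j : ℂ) (n : ℕ) : ℂ :=
  ∑ t ∈ Finset.range (n + 1),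
    pochC (-(n : ℂ)) t * pochC (-j) t / (pochC (j - n + 1) t * (Nat.factorial t : ℂ)) * (-1) ^ t

open Finset Filter
open scoped ENNReal Topology

namespace Stmt6Aux

lemma pochC_succ (a : ℂ) (k : ℕ) : pochC a (k + 1) = pochC a k * (a + k) :=
  Finset.prod_range_succ _ _

lemma pochC_zero (a : ℂ) : pochC a 0 = 1 := Finset.prod_range_zero _

/-- auxiliary: nonvanishing of integer shifts of a non-integer `j` -/
lemma jadd_ne {j : ℂ} (hj : ∀ q : ℤ, j ≠ (q : ℂ)) {x : ℂ} (q : ℤ) (hx : x = j + q) :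
    x ≠ 0 := by
  intro h0
  apply hj (-q)
  have h1 : j + q = 0 := hx ▸ h0
  push_cast
  linear_combination h1

lemma jGamma_ne {j : ℂ} (hj : ∀ q : ℤ, j ≠ (q : ℂ)) {x : ℂ} (q : ℤ) (hx : x = j + q) :
    Complex.Gamma x ≠ 0 := by
  refine Complex.Gamma_ne_zero fun m hm => ?_
  rw [hx] at hm
  exact hj (-(m : ℤ) - q) (by push_cast; linear_combination hm)

lemma Gamma_pochC {j : ℂ} (hj : ∀ q : ℤ, j ≠ (q : ℂ)) (q : ℤ) {z : ℂ} (hz : z = j + q)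
    (t : ℕ) : Complex.Gamma z * pochC z t = Complex.Gamma (z + t) := by
  induction t with
  | zero => simp [pochC_zero]
  | succ t ih =>
    have hzt : z + (t : ℂ) ≠ 0 := jadd_ne hj (q + t) (by rw [hz]; push_cast; ring)
    rw [pochC_succ, ← mul_assoc, ih,
      show z + ((t + 1 : ℕ) : ℂ) = (z + t) + 1 by push_cast; ring,
      Complex.Gamma_add_one _ hzt]
    ring

lemma pochC_ne {j : ℂ} (hj : ∀ q : ℤ, j ≠ (q : ℂ)) (q : ℤ) {z : ℂ} (hz : z = j + q)
    (t : ℕ) : pochC z t ≠ 0 := by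
  unfold pochC
  apply Finset.prod_ne_zero_iff.mpr
  intro i _
  exact jadd_ne hj (q + i) (by rw [hz]; push_cast; ring)

lemma pochC_neg_nat (n : ℕ) : ∀ t : ℕ, t ≤ n →
    pochC (-(n : ℂ)) t = (-1) ^ t * (Nat.factorial t : ℂ) * (n.choose t : ℂ) := by
  intro t
  induction t with
  | zero => intro _; simp [pochC_zero]
  | succ t ih =>
    intro h
    have ht : t ≤ n := Nat.le_of_succ_le h
    have key : (n.choose (t + 1) : ℂ) * (t + 1) = (n.choose t : ℂ) * ((n : ℂ) - t) := by
      have := Nat.choose_succ_right_eq n t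
      have hsub : ((n - t : ℕ) : ℂ) = (n : ℂ) - t := by
        push_cast [Nat.cast_sub ht]; ring
      calc (n.choose (t + 1) : ℂ) * (t + 1) = ((n.choose (t + 1) * (t + 1) : ℕ) : ℂ) := by push_cast; ring
        _ = ((n.choose t * (n - t) : ℕ) : ℂ) := by rw [this]
        _ = (n.choose t : ℂ) * ((n : ℂ) - t) := by push_cast [Nat.cast_sub ht]; ring
    rw [pochC_succ, ih ht]
    have hfac : (Nat.factorial (t + 1) : ℂ) = ((t : ℂ) + 1) * (Nat.factorial t : ℂ) := by
      rw [Nat.factorial_succ]; push_cast; ring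
    rw [hfac]
    have hpow : ((-1 : ℂ)) ^ (t + 1) = (-1) * (-1) ^ t := by rw [pow_succ]; ring
    rw [hpow]
    linear_combination ((-1 : ℂ)) ^ t * (Nat.factorial t : ℂ) * key

/-- The Gamma-normalized sequence `b n = S n / Γ(j - n + 1)`. -/
noncomputable def bb (j : ℂ) (n : ℕ) : ℂ :=
  ∑ t ∈ Finset.range (n + 1),
    (n.choose t : ℂ) * pochC (-j) t / Complex.Gamma (j - n + t + 1)

noncomputable def dd (j : ℂ) (n : ℕ) : ℂ :=
  ∑ t ∈ Finset.range (n + 1),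
    (t : ℂ) * (n.choose t : ℂ) * pochC (-j) t / Complex.Gamma (j - n + t + 1)

lemma S_eq {j : ℂ} (hj : ∀ q : ℤ, j ≠ (q : ℂ)) (n : ℕ) :
    S j n = Complex.Gamma (j - n + 1) * bb j n := by
  unfold S bb
  rw [Finset.mul_sum]
  refine Finset.sum_congr rfl fun t ht => ?_
  have htn : t ≤ n := Nat.lt_succ_iff.mp (Finset.mem_range.mp ht)
  rw [pochC_neg_nat n t htn]
  have hGn : Complex.Gamma (j - n + 1) ≠ 0 :=
    jGamma_ne hj (1 - n) (by push_cast; ring)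
  have hGt : Complex.Gamma (j - n + t + 1) ≠ 0 :=
    jGamma_ne hj (t + 1 - n) (by push_cast; ring)
  have hpoch : pochC (j - n + 1) t ≠ 0 :=
    pochC_ne hj (1 - n) (by push_cast; ring) t
  have hfac : (Nat.factorial t : ℂ) ≠ 0 := Nat.cast_ne_zero.mpr (Nat.factorial_ne_zero t)
  have hGP : Complex.Gamma (j - n + 1) * pochC (j - n + 1) t = Complex.Gamma (j - n + t + 1) := by
    rw [Gamma_pochC hj (1 - n) (by push_cast; ring) t]
    congr 1
    ring
  have hpow : ((-1 : ℂ)) ^ t * (-1) ^ t = 1 := by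
    rw [← pow_add, Even.neg_one_pow ⟨t, by ring⟩]
  rw [← hGP]
  field_simp
  linear_combination ((n.choose t : ℂ) * pochC (-j) t) * hpow

lemma bb_succ {j : ℂ} (hj : ∀ q : ℤ, j ≠ (q : ℂ)) (m : ℕ) :
    bb j (m + 1) = 2 * dd j m - (m : ℂ) * bb j m := by
  have hG1 : ∀ t : ℕ, Complex.Gamma (j - m + t) ≠ 0 :=
    fun t => jGamma_ne hj ((t : ℤ) - m) (by push_cast; ring)
  have hG2 : ∀ t : ℕ, Complex.Gamma (j - m + t + 1) ≠ 0 :=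
    fun t => jGamma_ne hj ((t : ℤ) + 1 - m) (by push_cast; ring)
  have hstep : ∀ t : ℕ, Complex.Gamma (j - m + t + 1) = (j - m + t) * Complex.Gamma (j - m + t) := by
    intro t
    rw [show j - m + t + 1 = (j - m + t) + 1 by ring]
    exact Complex.Gamma_add_one _ (jadd_ne hj ((t : ℤ) - m) (by push_cast; ring))
  have hf1 : ∀ s : ℕ, pochC (-j) (s + 1) / Complex.Gamma (j - m + ((s + 1 : ℕ) : ℂ)) =
      pochC (-j) s * (-j + s) / Complex.Gamma (j - m + s + 1) := by
    intro s
    rw [pochC_succ, show j - m + ((s + 1 : ℕ) : ℂ) = j - m + s + 1 by push_cast; ring]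
  have hf2 : ∀ t : ℕ, pochC (-j) t / Complex.Gamma (j - m + t) =
      pochC (-j) t * (j - m + t) / Complex.Gamma (j - m + t + 1) := by
    intro t
    rw [div_eq_div_iff (hG1 t) (hG2 t), hstep t]
    ring
  have step1 : bb j (m + 1) = ∑ t ∈ range (m + 2),
      ((m + 1).choose t : ℂ) * (pochC (-j) t / Complex.Gamma (j - m + t)) := by
    unfold bb
    refine Finset.sum_congr rfl fun t _ => ?_
    rw [show j - ((m + 1 : ℕ) : ℂ) + t + 1 = j - m + t by push_cast; ring, mul_div_assoc]
  rw [step1, Finset.sum_range_succ']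
  have step2 : ∑ s ∈ range (m + 1),
      ((m + 1).choose (s + 1) : ℂ) * (pochC (-j) (s + 1) / Complex.Gamma (j - m + ((s + 1 : ℕ) : ℂ)))
      = ∑ s ∈ range (m + 1),
        ((m.choose s : ℂ) * (pochC (-j) s * (-j + s) / Complex.Gamma (j - m + s + 1))
          + (m.choose (s + 1) : ℂ) * (pochC (-j) (s + 1) / Complex.Gamma (j - m + ((s + 1 : ℕ) : ℂ)))) := by
    refine Finset.sum_congr rfl fun s _ => ?_
    rw [hf1 s, Nat.choose_succ_succ m s, Nat.cast_add]
    ring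
  rw [step2, Finset.sum_add_distrib]
  have step3 : (∑ s ∈ range (m + 1),
        (m.choose (s + 1) : ℂ) * (pochC (-j) (s + 1) / Complex.Gamma (j - m + ((s + 1 : ℕ) : ℂ))))
      + ((m + 1).choose 0 : ℂ) * (pochC (-j) 0 / Complex.Gamma (j - m + ((0 : ℕ) : ℂ)))
      = ∑ t ∈ range (m + 1),
        (m.choose t : ℂ) * (pochC (-j) t * (j - m + t) / Complex.Gamma (j - m + t + 1)) := by
    have h0 : ((m + 1).choose 0 : ℂ) = (m.choose 0 : ℂ) := by norm_num
    rw [h0]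
    rw [← Finset.sum_range_succ' (fun t => (m.choose t : ℂ) * (pochC (-j) t / Complex.Gamma (j - m + t))) (m + 1)]
    rw [Finset.sum_range_succ]
    rw [Nat.choose_succ_self, Nat.cast_zero, zero_mul, add_zero]
    exact Finset.sum_congr rfl fun t _ => by rw [hf2 t]
  rw [add_assoc, step3]
  unfold dd bb
  rw [Finset.mul_sum, Finset.mul_sum, ← Finset.sum_sub_distrib, ← Finset.sum_add_distrib]
  refine Finset.sum_congr rfl fun t _ => ?_
  have hG := hG2 t
  field_simp
  ring

lemma dd_succ {j : ℂ} (hj : ∀ q : ℤ, j ≠ (q : ℂ)) (m : ℕ) :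
    dd j (m + 1) = ((m : ℂ) + 1) * (dd j m - j * bb j m) := by
  have hG2 : ∀ t : ℕ, Complex.Gamma (j - m + t + 1) ≠ 0 :=
    fun t => jGamma_ne hj ((t : ℤ) + 1 - m) (by push_cast; ring)
  have hf1 : ∀ s : ℕ, pochC (-j) (s + 1) / Complex.Gamma (j - m + ((s + 1 : ℕ) : ℂ)) =
      pochC (-j) s * (-j + s) / Complex.Gamma (j - m + s + 1) := by
    intro s
    rw [pochC_succ, show j - m + ((s + 1 : ℕ) : ℂ) = j - m + s + 1 by push_cast; ring]
  have step1 : dd j (m + 1) = ∑ t ∈ range (m + 2),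
      ((t : ℂ) * ((m + 1).choose t : ℂ)) * (pochC (-j) t / Complex.Gamma (j - m + t)) := by
    unfold dd
    refine Finset.sum_congr rfl fun t _ => ?_
    rw [show j - ((m + 1 : ℕ) : ℂ) + t + 1 = j - m + t by push_cast; ring, mul_div_assoc]
  rw [step1, Finset.sum_range_succ']
  rw [Nat.cast_zero, zero_mul, zero_mul, add_zero]
  have step2 : ∑ s ∈ range (m + 1),
      (((s + 1 : ℕ) : ℂ) * ((m + 1).choose (s + 1) : ℂ)) * (pochC (-j) (s + 1) / Complex.Gamma (j - m + ((s + 1 : ℕ) : ℂ)))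
      = ∑ s ∈ range (m + 1),
        (((m : ℂ) + 1) * (m.choose s : ℂ)) * (pochC (-j) s * (-j + s) / Complex.Gamma (j - m + s + 1)) := by
    refine Finset.sum_congr rfl fun s _ => ?_
    have hc : ((s + 1 : ℕ) : ℂ) * ((m + 1).choose (s + 1) : ℂ) = ((m : ℂ) + 1) * (m.choose s : ℂ) := by
      have h := Nat.add_one_mul_choose_eq m s
      have : (((m + 1) * m.choose s : ℕ) : ℂ) = (((m + 1).choose (s + 1) * (s + 1) : ℕ) : ℂ) := by
        rw [h]
      push_cast at this ⊢
      linear_combination -this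
    rw [hf1 s, hc]
  rw [step2]
  unfold dd bb
  rw [Finset.mul_sum, ← Finset.sum_sub_distrib, Finset.mul_sum]
  refine Finset.sum_congr rfl fun t _ => ?_
  have hG := hG2 t
  field_simp
  ring

lemma bb_rec {j : ℂ} (hj : ∀ q : ℤ, j ≠ (q : ℂ)) (m : ℕ) :
    bb j (m + 2) = ((m : ℂ) + 1) * ((m : ℂ) - 2 * j) * bb j m := by
  have b2 : bb j (m + 2) = 2 * dd j (m + 1) - ((m : ℂ) + 1) * bb j (m + 1) := by
    have := bb_succ hj (m + 1)
    rw [this]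
    push_cast
    ring
  rw [b2, dd_succ hj m, bb_succ hj m]
  ring

lemma bb_zero {j : ℂ} : bb j 0 = 1 / Complex.Gamma (j + 1) := by
  unfold bb
  rw [Finset.sum_range_one]
  norm_num [pochC_zero]

lemma bb_one {j : ℂ} (hj : ∀ q : ℤ, j ≠ (q : ℂ)) : bb j 1 = 0 := by
  have hj0 : j ≠ 0 := fun h => hj 0 (by simpa using h)
  have hG : Complex.Gamma j ≠ 0 := jGamma_ne hj 0 (by simp)
  have hG1 : Complex.Gamma (j + 1) ≠ 0 := jGamma_ne hj 1 (by push_cast; ring)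
  have hrec : Complex.Gamma (j + 1) = j * Complex.Gamma j := Complex.Gamma_add_one j hj0
  unfold bb
  rw [Finset.sum_range_succ, Finset.sum_range_one]
  have e0 : j - (1 : ℕ) + ((0 : ℕ) : ℂ) + 1 = j := by push_cast; ring
  have e1 : j - (1 : ℕ) + ((1 : ℕ) : ℂ) + 1 = j + 1 := by push_cast; ring
  rw [e0, e1]
  simp only [pochC_zero, pochC_succ]
  norm_num
  rw [hrec]
  field_simp
  ring

lemma bb_odd {j : ℂ} (hj : ∀ q : ℤ, j ≠ (q : ℂ)) (m : ℕ) : bb j (2 * m + 1) = 0 := by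
  induction m with
  | zero => simpa using bb_one hj
  | succ m ih =>
    have : 2 * (m + 1) + 1 = (2 * m + 1) + 2 := by ring
    rw [this, bb_rec hj, ih, mul_zero]

lemma bb_even_ne {j : ℂ} (hj : ∀ q : ℤ, j ≠ (q : ℂ)) (m : ℕ) : bb j (2 * m) ≠ 0 := by
  induction m with
  | zero =>
    simp only [Nat.mul_zero, bb_zero]
    exact one_div_ne_zero (jGamma_ne hj 1 (by push_cast; ring))
  | succ m ih =>
    have h2 : 2 * (m + 1) = (2 * m) + 2 := by ring
    rw [h2, bb_rec hj]
    refine mul_ne_zero (mul_ne_zero ?_ ?_) ih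
    · exact Nat.cast_add_one_ne_zero (2 * m)
    · intro h
      apply hj m
      have h2 : (2 : ℂ) * j = 2 * m := by push_cast at h ⊢; linear_combination -h
      have := mul_left_cancel₀ (two_ne_zero (α := ℂ)) h2
      exact_mod_cast this

end Stmt6Aux

/-- The radius of convergence of the left Wilson matrix element power series is `1`:
`limsup_{n→∞} |a n|^{1/n} = 1`. -/
theorem stmt_6 (j : ℝ) (hj : ∀ m : ℤ, 2 * j ≠ (m : ℝ)) (p : ℕ)
    (a : ℕ → ℂ)
    (ha : ∀ n : ℕ, a n = S (j : ℂ) n /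
      (Complex.Gamma ((j : ℂ) - n + 1) * Complex.Gamma ((n : ℂ) - p + 1))) :
    Filter.limsup
      (fun n : ℕ => (ENNReal.ofReal (‖a n‖)) ^ (1 / (n : ℝ)))
      Filter.atTop = 1 := by
  have hjC : ∀ q : ℤ, (j : ℂ) ≠ (q : ℂ) := by
    intro q h
    apply hj (2 * q)
    have hq : j = (q : ℝ) := by exact_mod_cast h
    push_cast [hq]; ring
  set u : ℕ → ℝ≥0∞ := fun n : ℕ => (ENNReal.ofReal (‖a n‖)) ^ (1 / (n : ℝ)) with hu
  -- values of a
  have a_odd : ∀ m : ℕ, a (2 * m + 1) = 0 := by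
    intro m
    rw [ha, Stmt6Aux.S_eq hjC, Stmt6Aux.bb_odd hjC, mul_zero, zero_div]
  have a_even : ∀ m : ℕ, p ≤ 2 * m →
      a (2 * m) = Stmt6Aux.bb (j : ℂ) (2 * m) / ((2 * m - p).factorial : ℂ) := by
    intro m hm
    rw [ha, Stmt6Aux.S_eq hjC]
    have hGn : Complex.Gamma ((j : ℂ) - ((2 * m : ℕ) : ℂ) + 1) ≠ 0 :=
      Stmt6Aux.jGamma_ne hjC (1 - (2 * m : ℕ) : ℤ) (by push_cast; ring)
    have hfac : Complex.Gamma (((2 * m : ℕ) : ℂ) - p + 1) = ((2 * m - p).factorial : ℂ) := by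
      have harg : (((2 * m : ℕ) : ℂ)) - p + 1 = ((2 * m - p : ℕ) : ℂ) + 1 := by
        push_cast [Nat.cast_sub hm]; ring
      rw [harg, Complex.Gamma_nat_eq_factorial]
    rw [hfac, mul_div_mul_left _ _ hGn]
  have a_even_ne : ∀ m : ℕ, p ≤ 2 * m → a (2 * m) ≠ 0 := by
    intro m hm
    rw [a_even m hm]
    exact div_ne_zero (Stmt6Aux.bb_even_ne hjC m)
      (Nat.cast_ne_zero.mpr (Nat.factorial_ne_zero _))
  set A : ℕ → ℝ := fun m => ‖a (2 * m)‖ with hAdef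
  set R : ℕ → ℝ := fun m =>
    ((2 * (m : ℝ) + 1) * |2 * (m : ℝ) - 2 * j|) /
      ((2 * (m : ℝ) + 2 - p) * (2 * (m : ℝ) + 1 - p)) with hRdef
  have hApos : ∀ m : ℕ, p ≤ 2 * m → 0 < A m := fun m hm =>
    norm_pos_iff.mpr (a_even_ne m hm)
  have hsubne : ∀ m : ℕ, 2 * (m : ℝ) - 2 * j ≠ 0 := by
    intro m h
    exact hj (2 * m) (by push_cast; linarith)
  have hRpos : ∀ m : ℕ, p ≤ 2 * m → 0 < R m := by
    intro m hm
    have hp : (p : ℝ) ≤ 2 * m := by exact_mod_cast hm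
    apply div_pos
    · exact mul_pos (by positivity) (abs_pos.mpr (hsubne m))
    · exact mul_pos (by linarith) (by linarith)
  -- ratio identity
  have hrat : ∀ m : ℕ, p ≤ 2 * m → A (m + 1) = R m * A m := by
    intro m hm
    have hcx : a (2 * (m + 1)) =
        ((((2 * m : ℕ) : ℂ) + 1) * (((2 * m : ℕ) : ℂ) - 2 * (j : ℂ)) /
          (((2 * m + 2 - p : ℕ) : ℂ) * ((2 * m + 1 - p : ℕ) : ℂ))) * a (2 * m) := by
      have e1 := a_even (m + 1) (by omega)
      rw [show 2 * (m + 1) = 2 * m + 2 from by ring] at e1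
      have e0 := a_even m hm
      rw [show 2 * (m + 1) = 2 * m + 2 from by ring, e1, e0,
        Stmt6Aux.bb_rec hjC (2 * m)]
      have hfacts : ((2 * m + 2 - p).factorial : ℂ) =
          ((2 * m + 2 - p : ℕ) : ℂ) * ((2 * m + 1 - p : ℕ) : ℂ) * ((2 * m - p).factorial : ℂ) := by
        have h1 : 2 * m + 2 - p = (2 * m - p) + 2 := by omega
        have h2 : 2 * m + 1 - p = (2 * m - p) + 1 := by omega
        rw [h1, h2, Nat.factorial_succ, Nat.factorial_succ]
        push_cast; ring
      rw [hfacts]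
      have ne1 : ((2 * m + 2 - p : ℕ) : ℂ) ≠ 0 := Nat.cast_ne_zero.mpr (by omega)
      have ne2 : ((2 * m + 1 - p : ℕ) : ℂ) ≠ 0 := Nat.cast_ne_zero.mpr (by omega)
      have ne3 : ((2 * m - p).factorial : ℂ) ≠ 0 :=
        Nat.cast_ne_zero.mpr (Nat.factorial_ne_zero _)
      field_simp
    have habs := congrArg (‖·‖) hcx
    rw [norm_mul, norm_div, norm_mul, norm_mul] at habs
    have c1 : ‖((2 * m : ℕ) : ℂ) + 1‖ = 2 * (m : ℝ) + 1 := by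
      rw [show (((2 * m : ℕ) : ℂ) + 1) = (((2 * (m : ℝ) + 1 : ℝ)) : ℂ) by push_cast; ring,
        Complex.norm_real, Real.norm_eq_abs, abs_of_pos (by positivity)]
    have c2 : ‖((2 * m : ℕ) : ℂ) - 2 * (j : ℂ)‖ = |2 * (m : ℝ) - 2 * j| := by
      rw [show (((2 * m : ℕ) : ℂ) - 2 * (j : ℂ)) = (((2 * (m : ℝ) - 2 * j : ℝ)) : ℂ) by push_cast; ring,
        Complex.norm_real, Real.norm_eq_abs]
    have c3 : ‖((2 * m + 2 - p : ℕ) : ℂ)‖ = 2 * (m : ℝ) + 2 - p := by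
      rw [Complex.norm_natCast]
      push_cast [Nat.cast_sub (by omega : p ≤ 2 * m + 2)]
      ring
    have c4 : ‖((2 * m + 1 - p : ℕ) : ℂ)‖ = 2 * (m : ℝ) + 1 - p := by
      rw [Complex.norm_natCast]
      push_cast [Nat.cast_sub (by omega : p ≤ 2 * m + 1)]
      ring
    rw [show A (m + 1) = ‖a (2 * (m + 1))‖ from rfl, habs, c1, c2, c3, c4]
  -- limit of the ratio
  have h0 : Tendsto (fun m : ℕ => (m : ℝ)⁻¹) atTop (𝓝 0) := tendsto_inv_atTop_nhds_zero_nat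
  have hR1 : Tendsto R atTop (𝓝 1) := by
    have hnum : Tendsto (fun m : ℕ => (2 + (m : ℝ)⁻¹) * (2 - 2 * j * (m : ℝ)⁻¹)) atTop
        (𝓝 ((2 + 0) * (2 - 2 * j * 0))) :=
      (tendsto_const_nhds.add h0).mul (tendsto_const_nhds.sub (tendsto_const_nhds.mul h0))
    have hden : Tendsto (fun m : ℕ => (2 + (2 - (p : ℝ)) * (m : ℝ)⁻¹) * (2 + (1 - (p : ℝ)) * (m : ℝ)⁻¹)) atTop
        (𝓝 ((2 + (2 - (p : ℝ)) * 0) * (2 + (1 - (p : ℝ)) * 0))) :=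
      (tendsto_const_nhds.add (tendsto_const_nhds.mul h0)).mul
        (tendsto_const_nhds.add (tendsto_const_nhds.mul h0))
    have hL := hnum.div hden (by norm_num)
    have hL1 : ((2 + 0) * (2 - 2 * j * 0)) / ((2 + (2 - (p : ℝ)) * 0) * (2 + (1 - (p : ℝ)) * 0)) = 1 := by
      norm_num
    rw [hL1] at hL
    refine hL.congr' ?_
    filter_upwards [eventually_ge_atTop (p + Nat.ceil |j| + 1)] with m hm
    have hm1 : 1 ≤ m := by omega
    have hmp : p ≤ m := by omega
    have hmj : Nat.ceil |j| ≤ m := by omega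
    have hm0 : (0 : ℝ) < m := by exact_mod_cast Nat.pos_of_ne_zero (by omega)
    have hpm : (p : ℝ) ≤ m := by exact_mod_cast hmp
    have hjm : j ≤ (m : ℝ) := by
      calc j ≤ |j| := le_abs_self j
        _ ≤ (Nat.ceil |j| : ℝ) := Nat.le_ceil _
        _ ≤ m := by exact_mod_cast hmj
    have habsj : |2 * (m : ℝ) - 2 * j| = 2 * (m : ℝ) - 2 * j := abs_of_nonneg (by linarith)
    simp only [Pi.div_apply, hRdef]
    rw [habsj]
    have hd1 : (0 : ℝ) < 2 + (2 - (p : ℝ)) * (m : ℝ)⁻¹ := by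
      have e1 : 2 + (2 - (p : ℝ)) * (m : ℝ)⁻¹ = (2 * m + 2 - p) / m := by
        field_simp; ring
      rw [e1]
      exact div_pos (by linarith) hm0
    have hd2 : (0 : ℝ) < 2 + (1 - (p : ℝ)) * (m : ℝ)⁻¹ := by
      have e2 : 2 + (1 - (p : ℝ)) * (m : ℝ)⁻¹ = (2 * m + 1 - p) / m := by
        field_simp; ring
      rw [e2]
      exact div_pos (by linarith) hm0
    rw [div_eq_div_iff (mul_pos hd1 hd2).ne'
      (mul_pos (show (0:ℝ) < 2 * m + 2 - p by linarith) (show (0:ℝ) < 2 * m + 1 - p by linarith)).ne']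
    field_simp
    try ring
    try exact Or.inl trivial
  have hlogR : Tendsto (fun m : ℕ => Real.log (R m)) atTop (𝓝 0) := by
    have hc := (Real.continuousAt_log one_ne_zero).tendsto.comp hR1
    rw [Real.log_one] at hc; exact hc
  set g : ℕ → ℝ := fun i => Real.log (R (i + p)) with hgdef
  have hg : Tendsto g atTop (𝓝 0) := hlogR.comp (tendsto_add_atTop_nat p)
  have hces : Tendsto (fun n : ℕ => ((n : ℝ)⁻¹) * ∑ i ∈ range n, g i) atTop (𝓝 0) := hg.cesaro
  -- telescoping
  have htel : ∀ m : ℕ, Real.log (A (m + p)) = Real.log (A p) + ∑ i ∈ range m, g i := by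
    intro m
    induction m with
    | zero => simp
    | succ m ih =>
      have hp2 : p ≤ 2 * (m + p) := by omega
      have hr := hrat (m + p) hp2
      rw [show m + 1 + p = (m + p) + 1 from by ring, hr,
        Real.log_mul (ne_of_gt (hRpos _ hp2)) (ne_of_gt (hApos _ hp2)), ih,
        Finset.sum_range_succ]
      ring
  -- log A (m+p) / (2 (m+p)) → 0
  have hexp : Tendsto (fun m : ℕ => Real.log (A (m + p)) / (2 * ((m : ℝ) + p))) atTop (𝓝 0) := by
    apply squeeze_zero_norm'
      (a := fun m : ℕ => |Real.log (A p)| * (m : ℝ)⁻¹ + |((m : ℝ)⁻¹) * ∑ i ∈ range m, g i|)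
    · filter_upwards [eventually_ge_atTop 1] with m hm1
      have hm0 : (0 : ℝ) < m := by exact_mod_cast Nat.pos_of_ne_zero (by omega)
      have hden : (0 : ℝ) < 2 * ((m : ℝ) + p) := by positivity
      rw [htel m]
      have h1 : ‖(Real.log (A p) + ∑ i ∈ range m, g i) / (2 * ((m : ℝ) + p))‖
          = |Real.log (A p) + ∑ i ∈ range m, g i| / (2 * ((m : ℝ) + p)) := by
        rw [Real.norm_eq_abs, abs_div, abs_of_pos hden]
      rw [h1]
      have h2 : |Real.log (A p) + ∑ i ∈ range m, g i| ≤ |Real.log (A p)| + |∑ i ∈ range m, g i| :=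
        abs_add_le _ _
      have h3 : (m : ℝ) ≤ 2 * ((m : ℝ) + p) := by
        have : (0 : ℝ) ≤ (p : ℝ) := Nat.cast_nonneg p
        linarith
      calc |Real.log (A p) + ∑ i ∈ range m, g i| / (2 * ((m : ℝ) + p))
          ≤ (|Real.log (A p)| + |∑ i ∈ range m, g i|) / (2 * ((m : ℝ) + p)) :=
            (div_le_div_iff_of_pos_right hden).mpr h2
        _ ≤ (|Real.log (A p)| + |∑ i ∈ range m, g i|) / m :=
            div_le_div_of_nonneg_left (by positivity) hm0 h3
        _ = |Real.log (A p)| * (m : ℝ)⁻¹ + |((m : ℝ)⁻¹) * ∑ i ∈ range m, g i| := by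
            rw [add_div, abs_mul, abs_inv, abs_of_pos hm0]
            ring
    · have t1 : Tendsto (fun m : ℕ => |Real.log (A p)| * (m : ℝ)⁻¹) atTop (𝓝 (|Real.log (A p)| * 0)) :=
        tendsto_const_nhds.mul h0
      rw [mul_zero] at t1
      have t2 : Tendsto (fun m : ℕ => |((m : ℝ)⁻¹) * ∑ i ∈ range m, g i|) atTop (𝓝 |0|) :=
        hces.abs
      rw [abs_zero] at t2
      simpa using t1.add t2
  -- the even subsequence of u tends to 1
  have hAtend : Tendsto (fun m : ℕ => (A (m + p)) ^ (1 / ((2 * ((m : ℝ) + p)))) ) atTop (𝓝 1) := by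
    have hexp2 : Tendsto (fun m : ℕ => Real.exp (Real.log (A (m + p)) / (2 * ((m : ℝ) + p)))) atTop
        (𝓝 (Real.exp 0)) := (Real.continuous_exp.tendsto 0).comp hexp
    rw [Real.exp_zero] at hexp2
    refine hexp2.congr fun m => ?_
    have hpos : 0 < A (m + p) := hApos (m + p) (by omega)
    rw [Real.rpow_def_of_pos hpos]
    ring_nf
  have huφ : ∀ m : ℕ, u (2 * (m + p)) = ENNReal.ofReal ((A (m + p)) ^ (1 / ((2 * ((m : ℝ) + p))))) := by
    intro m
    have hpos : 0 < A (m + p) := hApos (m + p) (by omega)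
    have hcast : ((2 * (m + p) : ℕ) : ℝ) = 2 * ((m : ℝ) + p) := by push_cast; ring
    rw [hu]
    simp only []
    rw [hcast, ENNReal.ofReal_rpow_of_pos hpos]
  have hutend : Tendsto (fun m : ℕ => u (2 * (m + p))) atTop (𝓝 1) := by
    have h1 := ENNReal.tendsto_ofReal hAtend
    rw [ENNReal.ofReal_one] at h1
    exact h1.congr fun m => (huφ m).symm
  have hφ : Tendsto (fun m : ℕ => 2 * (m + p)) atTop atTop :=
    tendsto_atTop_mono (fun m => by simpa using (by omega : m ≤ 2 * (m + p))) tendsto_id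
  have hub : limsup u atTop ≤ 1 := by
    refine le_of_forall_gt_imp_ge_of_dense fun b hb => ?_
    refine Filter.limsup_le_of_le (by isBoundedDefault) ?_
    have hev : ∀ᶠ m in atTop, u (2 * (m + p)) < b := hutend.eventually (gt_mem_nhds hb)
    obtain ⟨N, hN⟩ := eventually_atTop.mp hev
    refine eventually_atTop.mpr ⟨2 * (N + p) + 2, fun n hn => ?_⟩
    rcases Nat.even_or_odd n with ⟨k, hk⟩ | ⟨k, hk⟩
    · have hk2 : n = 2 * ((k - p) + p) := by omega
      have hge : N ≤ k - p := by omega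
      calc u n = u (2 * ((k - p) + p)) := by rw [← hk2]
        _ ≤ b := (hN _ hge).le
    · have hz : a n = 0 := hk ▸ a_odd k
      have hn0 : (0 : ℝ) < 1 / (n : ℝ) := by
        have : 0 < n := by omega
        positivity
      have hu0 : u n = 0 := by
        rw [hu]
        simp only []
        rw [hz, norm_zero, ENNReal.ofReal_zero, ENNReal.zero_rpow_of_pos hn0]
      rw [hu0]
      exact zero_le
  have hlb : 1 ≤ limsup u atTop := by
    by_contra hlt
    push_neg at hlt
    obtain ⟨c, hc1, hc2⟩ := exists_between hlt
    have hfreq : ∃ᶠ n in atTop, c ≤ u n := by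
      apply hφ.frequently
      exact ((hutend.eventually (lt_mem_nhds hc2)).mono fun m hm => hm.le).frequently
    exact absurd (Filter.le_limsup_of_frequently_le hfreq (by isBoundedDefault))
      (not_le.mpr hc1)
  exact le_antisymm hub hlb
end

section
/- Let j ∈ ℝ with 2j ∉ ℤ, let p ∈ ℕ, and let z < 0 be a real number. Setting q(ρ) := −z·e^{ρ}, one has lim_{ρ→+∞} e^{−ρp} · (q(ρ)+i)^p · ∑_{k=0}^{p} ((−j)_k (−p)_k / ((j−p+1)_k · k!)) · ((q(ρ)−i)/(q(ρ)+i))^k = (−z)^p · Γ(2j+1)·Γ(j−p+1) / (Γ(2j−p+1)·Γ(j+1)). -/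
@[simp] lemma pochC_zero (a : ℂ) : pochC a 0 = 1 := by simp [pochC]

lemma pochC_succ (a : ℂ) (k : ℕ) : pochC a (k + 1) = pochC a k * (a + k) :=
  Finset.prod_range_succ _ _

lemma pochC_add (a : ℂ) (m n : ℕ) :
    pochC a (m + n) = pochC a m * pochC (a + m) n := by
  induction n with
  | zero => simp
  | succ n ih =>
    rw [← add_assoc, pochC_succ, ih, pochC_succ]
    push_cast [Nat.cast_add]
    ring

lemma pochC_reflect (a : ℂ) (m : ℕ) :
    pochC a m = (-1) ^ m * pochC (-a - m + 1) m := by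
  unfold pochC
  rw [← Finset.prod_range_reflect (fun i => a + i) m,
    show ((-1 : ℂ)) ^ m = ∏ _i ∈ Finset.range m, (-1 : ℂ) by simp,
    ← Finset.prod_mul_distrib]
  refine Finset.prod_congr rfl fun i hi => ?_
  simp only [Finset.mem_range] at hi
  have h1 : m - 1 - i = m - (1 + i) := by omega
  have h2 : ((m - 1 - i : ℕ) : ℂ) = (m : ℂ) - 1 - i := by
    rw [h1, Nat.cast_sub (by omega : 1 + i ≤ m)]
    push_cast; ring
  rw [h2]; ring

lemma pochC_vandermonde (a b : ℂ) (p : ℕ) :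
    pochC (a + b) p =
      ∑ k ∈ Finset.range (p + 1), (p.choose k : ℂ) * pochC a k * pochC b (p - k) := by
  induction p with
  | zero => simp
  | succ p ih =>
    rw [pochC_succ, ih]
    rw [Finset.sum_range_succ'
      (fun k => ((p + 1).choose k : ℂ) * pochC a k * pochC b (p + 1 - k)) (p + 1)]
    simp only [Nat.succ_sub_succ, Nat.choose_zero_right, Nat.cast_one, pochC_zero,
      Nat.sub_zero, one_mul, mul_one]
    have key : ∀ k ∈ Finset.range (p + 1),
        ((p + 1).choose (k + 1) : ℂ) * pochC a (k + 1) * pochC b (p - k)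
          = (p.choose k : ℂ) * pochC a k * pochC b (p - k) * (a + k)
            + (p.choose (k + 1) : ℂ) * pochC a (k + 1) * pochC b (p - k) := by
      intro k _
      rw [Nat.choose_succ_succ, pochC_succ]
      push_cast; ring
    rw [Finset.sum_congr rfl key, Finset.sum_add_distrib]
    have h2 : (∑ k ∈ Finset.range (p + 1),
          (p.choose (k + 1) : ℂ) * pochC a (k + 1) * pochC b (p - k)) + pochC b (p + 1)
        = ∑ k ∈ Finset.range (p + 1), (p.choose k : ℂ) * pochC a k * pochC b (p + 1 - k) := by
      have h3 := Finset.sum_range_succ'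
        (fun k => (p.choose k : ℂ) * pochC a k * pochC b (p + 1 - k)) (p + 1)
      have h4 := Finset.sum_range_succ
        (fun k => (p.choose k : ℂ) * pochC a k * pochC b (p + 1 - k)) (p + 1)
      simp only [Nat.succ_sub_succ, Nat.choose_zero_right, Nat.cast_one, pochC_zero,
        Nat.sub_zero, one_mul, Nat.choose_succ_self, Nat.cast_zero, zero_mul,
        add_zero, mul_one] at h3 h4
      rw [← h4, h3]
    rw [add_assoc (∑ x ∈ Finset.range (p + 1),
      (p.choose x : ℂ) * pochC a x * pochC b (p - x) * (a + x)), h2]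
    have h5 : ∀ k ∈ Finset.range (p + 1),
        (p.choose k : ℂ) * pochC a k * pochC b (p + 1 - k)
          = (p.choose k : ℂ) * pochC a k * pochC b (p - k) * (b + (p - k : ℕ)) := by
      intro k hk
      simp only [Finset.mem_range] at hk
      rw [show p + 1 - k = (p - k) + 1 from by omega, pochC_succ]
      ring
    rw [Finset.sum_congr rfl h5, ← Finset.sum_add_distrib, Finset.sum_mul]
    refine Finset.sum_congr rfl fun k hk => ?_
    simp only [Finset.mem_range] at hk
    have : ((p - k : ℕ) : ℂ) = (p : ℂ) - k := by
      rw [Nat.cast_sub (by omega)]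
    rw [this]
    ring

lemma pochC_neg_nat_s7 (p k : ℕ) :
    pochC (-(p : ℂ)) k = (-1) ^ k * (p.descFactorial k : ℂ) := by
  induction k with
  | zero => simp
  | succ k ih =>
    rw [pochC_succ, ih, Nat.descFactorial_succ]
    rcases le_or_gt (k + 1) p with h | h
    · have : ((p - k : ℕ) : ℂ) = (p : ℂ) - k := by rw [Nat.cast_sub (by omega)]
      push_cast [this]
      ring
    · have h0 : p - k = 0 := by omega
      rcases eq_or_lt_of_le (by omega : p ≤ k) with rfl | hlt
      · simp [h0]
      · rw [Nat.descFactorial_eq_zero_iff_lt.2 hlt]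
        simp [h0]

lemma pochC_ne_zero (a : ℂ) (k : ℕ) (h : ∀ i : ℕ, i < k → a + i ≠ 0) :
    pochC a k ≠ 0 := by
  unfold pochC
  exact Finset.prod_ne_zero_iff.2 fun i hi => h i (Finset.mem_range.1 hi)

lemma key_sum (j : ℂ) (p : ℕ) (hne : ∀ i : ℕ, i < p → j - p + 1 + i ≠ 0) :
    ∑ k ∈ Finset.range (p + 1),
        pochC (-j) k * pochC (-(p : ℂ)) k / (pochC (j - p + 1) k * (Nat.factorial k : ℂ))
      = pochC (2 * j - p + 1) p / pochC (j - p + 1) p := by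
  have hD : pochC (j - p + 1) p ≠ 0 := pochC_ne_zero _ _ hne
  have hDk : ∀ k : ℕ, k ≤ p → pochC (j - p + 1) k ≠ 0 := fun k hk =>
    pochC_ne_zero _ _ fun i hi => hne i (by omega)
  rw [eq_div_iff hD, Finset.sum_mul]
  have hrefl2 : pochC (2 * j - (p : ℂ) + 1) p = (-1) ^ p * pochC (-j + -j) p := by
    rw [pochC_reflect (2 * j - (p : ℂ) + 1) p,
      show -(2 * j - (p : ℂ) + 1) - p + 1 = -j + -j by ring, pochC_reflect (-j + -j) p,
      show -(-j + -j) - (p : ℂ) + 1 = 2 * j - p + 1 by ring]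
  rw [hrefl2, pochC_vandermonde (-j) (-j) p, Finset.mul_sum]
  refine Finset.sum_congr rfl fun k hk => ?_
  simp only [Finset.mem_range] at hk
  have hkp : k ≤ p := by omega
  obtain ⟨m, rfl⟩ : ∃ m, p = k + m := ⟨p - k, by omega⟩
  have hsplit : pochC (j - (k + m : ℕ) + 1) (k + m)
      = pochC (j - (k + m : ℕ) + 1) k * pochC (j - (k + m : ℕ) + 1 + k) m := pochC_add _ _ _
  have hrefl : pochC (j - (k + m : ℕ) + 1 + k) m = (-1) ^ m * pochC (-j) m := by
    rw [pochC_reflect (j - (k + m : ℕ) + 1 + k) m,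
      show -(j - ((k + m : ℕ) : ℂ) + 1 + k) - (m : ℂ) + 1 = -j + ((k + m : ℕ) - (k : ℂ) - m) by
        ring, show (((k + m : ℕ) : ℂ) - (k : ℂ) - m) = 0 by push_cast; ring, add_zero]
  have hpk := pochC_neg_nat_s7 (k + m) k
  rw [hsplit, hrefl, hpk, Nat.descFactorial_eq_factorial_mul_choose,
    Nat.add_sub_cancel_left]
  have hfac : (Nat.factorial k : ℂ) ≠ 0 := Nat.cast_ne_zero.2 (Nat.factorial_ne_zero k)
  have hDk' : pochC (j - ((k + m : ℕ) : ℂ) + 1) k ≠ 0 := hDk k hkp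
  rw [div_mul_eq_mul_div, div_eq_iff (mul_ne_zero hDk' hfac)]
  push_cast
  ring

lemma Gamma_shift (a : ℂ) (n : ℕ) (h : ∀ i : ℕ, i < n → a + i ≠ 0) :
    Complex.Gamma (a + n) = pochC a n * Complex.Gamma a := by
  induction n with
  | zero => simp
  | succ n ih =>
    rw [show a + ((n : ℕ) + 1 : ℕ) = (a + n) + 1 by push_cast; ring,
      Complex.Gamma_add_one _ (h n (by omega)), ih fun i hi => h i (by omega), pochC_succ]
    ring


/-- Large-`ρ` asymptotics of the closed-form right Wilson matrix element. -/
theorem stmt_7 (j : ℝ) (hj : ∀ m : ℤ, 2 * j ≠ (m : ℝ)) (p : ℕ) (z : ℝ) (hz : z < 0) :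
    Filter.Tendsto
      (fun ρ : ℝ =>
        ((Real.exp (-(ρ * p)) : ℝ) : ℂ) *
          (((-z * Real.exp ρ : ℝ) : ℂ) + Complex.I) ^ p *
          ∑ k ∈ Finset.range (p + 1),
            pochC (-(j : ℂ)) k * pochC (-(p : ℂ)) k /
                (pochC ((j : ℂ) - p + 1) k * (Nat.factorial k : ℂ)) *
              ((((-z * Real.exp ρ : ℝ) : ℂ) - Complex.I) /
                (((-z * Real.exp ρ : ℝ) : ℂ) + Complex.I)) ^ k)
      Filter.atTop
      (nhds ((((-z : ℝ) ^ p : ℝ) : ℂ) * Complex.Gamma (2 * (j : ℂ) + 1) *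
        Complex.Gamma ((j : ℂ) - p + 1) /
        (Complex.Gamma (2 * (j : ℂ) - p + 1) * Complex.Gamma ((j : ℂ) + 1)))) := by
  have hzne : (-(z:ℝ) : ℂ) ≠ 0 := neg_ne_zero.2 (Complex.ofReal_ne_zero.2 hz.ne)
  -- coefficient abbreviation
  set c : ℕ → ℂ := fun k =>
    pochC (-(j : ℂ)) k * pochC (-(p : ℂ)) k /
      (pochC ((j : ℂ) - p + 1) k * (Nat.factorial k : ℂ)) with hc
  -- nonvanishing facts
  have hjint : ∀ i : ℕ, i < p → (j : ℂ) - p + 1 + i ≠ 0 := by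
    intro i hi h
    rw [show (j : ℂ) - p + 1 + i = ((j - p + 1 + i : ℝ) : ℂ) by push_cast; ring,
      Complex.ofReal_eq_zero] at h
    exact hj (2 * ((p : ℤ) - 1 - i)) (by push_cast; linarith)
  have h2jint : ∀ i : ℕ, i < p → 2 * (j : ℂ) - p + 1 + i ≠ 0 := by
    intro i hi h
    rw [show 2 * (j : ℂ) - p + 1 + i = ((2 * j - p + 1 + i : ℝ) : ℂ) by push_cast; ring,
      Complex.ofReal_eq_zero] at h
    exact hj ((p : ℤ) - 1 - i) (by push_cast; linarith)
  have hG2 : Complex.Gamma (2 * (j : ℂ) - p + 1) ≠ 0 := by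
    apply Complex.Gamma_ne_zero
    intro m h
    rw [show 2 * (j : ℂ) - p + 1 = ((2 * j - p + 1 : ℝ) : ℂ) by push_cast; ring,
      show -(m : ℂ) = ((-(m : ℝ) : ℝ) : ℂ) by push_cast; ring] at h
    exact hj ((p : ℤ) - 1 - m) (by have := Complex.ofReal_inj.1 h; push_cast; linarith)
  have hG1 : Complex.Gamma ((j : ℂ) - p + 1) ≠ 0 := by
    apply Complex.Gamma_ne_zero
    intro m h
    rw [show (j : ℂ) - p + 1 = ((j - p + 1 : ℝ) : ℂ) by push_cast; ring,
      show -(m : ℂ) = ((-(m : ℝ) : ℝ) : ℂ) by push_cast; ring] at h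
    exact hj (2 * ((p : ℤ) - 1 - m)) (by have := Complex.ofReal_inj.1 h; push_cast; linarith)
  have hDp : pochC ((j : ℂ) - p + 1) p ≠ 0 := pochC_ne_zero _ _ hjint
  -- the limit value equals (-z)^p * ∑ c k
  have hval : (((-z : ℝ) ^ p : ℝ) : ℂ) * Complex.Gamma (2 * (j : ℂ) + 1) *
        Complex.Gamma ((j : ℂ) - p + 1) /
        (Complex.Gamma (2 * (j : ℂ) - p + 1) * Complex.Gamma ((j : ℂ) + 1))
      = (-(z : ℂ)) ^ p * ∑ k ∈ Finset.range (p + 1), c k * (1 : ℂ) ^ k := by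
    have hg1 : Complex.Gamma (2 * (j : ℂ) + 1)
        = pochC (2 * (j : ℂ) - p + 1) p * Complex.Gamma (2 * (j : ℂ) - p + 1) := by
      rw [show 2 * (j : ℂ) + 1 = (2 * (j : ℂ) - p + 1) + p by ring]
      exact Gamma_shift _ _ h2jint
    have hg2 : Complex.Gamma ((j : ℂ) + 1)
        = pochC ((j : ℂ) - p + 1) p * Complex.Gamma ((j : ℂ) - p + 1) := by
      rw [show (j : ℂ) + 1 = ((j : ℂ) - p + 1) + p by ring]
      exact Gamma_shift _ _ hjint
    simp only [one_pow, mul_one]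
    rw [hc]
    rw [key_sum (j : ℂ) p hjint, hg1, hg2]
    rw [show (((-z : ℝ) ^ p : ℝ) : ℂ) = (-(z : ℂ)) ^ p by push_cast; ring]
    field_simp
  rw [hval]
  -- the nice model function
  have ht : Filter.Tendsto (fun ρ : ℝ => ((Real.exp (-ρ) : ℝ) : ℂ)) Filter.atTop (nhds 0) := by
    rw [show ((0 : ℂ)) = ((0 : ℝ) : ℂ) by norm_num]
    exact (Complex.continuous_ofReal.tendsto 0).comp
      (Real.tendsto_exp_atBot.comp Filter.tendsto_neg_atTop_atBot)
  have hbase : Filter.Tendsto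
      (fun ρ : ℝ => (-(z : ℂ)) + Complex.I * ((Real.exp (-ρ) : ℝ) : ℂ))
      Filter.atTop (nhds (-(z : ℂ))) := by
    have h0 : Filter.Tendsto (fun ρ : ℝ => Complex.I * ((Real.exp (-ρ) : ℝ) : ℂ))
        Filter.atTop (nhds 0) := by simpa using ht.const_mul Complex.I
    simpa using h0.const_add (-(z : ℂ))
  have hnum : Filter.Tendsto
      (fun ρ : ℝ => (-(z : ℂ)) - Complex.I * ((Real.exp (-ρ) : ℝ) : ℂ))
      Filter.atTop (nhds (-(z : ℂ))) := by
    have h0 : Filter.Tendsto (fun ρ : ℝ => Complex.I * ((Real.exp (-ρ) : ℝ) : ℂ))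
        Filter.atTop (nhds 0) := by simpa using ht.const_mul Complex.I
    simpa using h0.const_sub (-(z : ℂ))
  have hratio : Filter.Tendsto
      (fun ρ : ℝ => ((-(z : ℂ)) - Complex.I * ((Real.exp (-ρ) : ℝ) : ℂ)) /
        ((-(z : ℂ)) + Complex.I * ((Real.exp (-ρ) : ℝ) : ℂ)))
      Filter.atTop (nhds 1) := by
    have := hnum.div hbase hzne
    rwa [div_self hzne] at this
  have hG : Filter.Tendsto
      (fun ρ : ℝ => ((-(z : ℂ)) + Complex.I * ((Real.exp (-ρ) : ℝ) : ℂ)) ^ p *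
        ∑ k ∈ Finset.range (p + 1), c k *
          (((-(z : ℂ)) - Complex.I * ((Real.exp (-ρ) : ℝ) : ℂ)) /
            ((-(z : ℂ)) + Complex.I * ((Real.exp (-ρ) : ℝ) : ℂ))) ^ k)
      Filter.atTop
      (nhds ((-(z : ℂ)) ^ p * ∑ k ∈ Finset.range (p + 1), c k * (1 : ℂ) ^ k)) := by
    refine (hbase.pow p).mul (tendsto_finset_sum _ fun k _ => ?_)
    exact tendsto_const_nhds.mul (hratio.pow k)
  refine hG.congr fun ρ => ?_
  -- pointwise algebraic identity
  have hE : Real.exp ρ ≠ 0 := (Real.exp_pos ρ).ne'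
  have htne : ((Real.exp (-ρ) : ℝ) : ℂ) ≠ 0 :=
    Complex.ofReal_ne_zero.2 (Real.exp_pos _).ne'
  have hmul1 : ((Real.exp (-ρ) : ℝ) : ℂ) * ((Real.exp ρ : ℝ) : ℂ) = 1 := by
    rw [← Complex.ofReal_mul, ← Real.exp_add]
    norm_num
  have hb : ((Real.exp (-ρ) : ℝ) : ℂ) * (((-z * Real.exp ρ : ℝ) : ℂ) + Complex.I)
      = (-(z : ℂ)) + Complex.I * ((Real.exp (-ρ) : ℝ) : ℂ) := by
    simp only [Complex.ofReal_mul, Complex.ofReal_neg]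
    linear_combination (-(z : ℂ)) * hmul1
  have hn : ((Real.exp (-ρ) : ℝ) : ℂ) * (((-z * Real.exp ρ : ℝ) : ℂ) - Complex.I)
      = (-(z : ℂ)) - Complex.I * ((Real.exp (-ρ) : ℝ) : ℂ) := by
    simp only [Complex.ofReal_mul, Complex.ofReal_neg]
    linear_combination (-(z : ℂ)) * hmul1
  have hexp : ((Real.exp (-(ρ * p)) : ℝ) : ℂ) = ((Real.exp (-ρ) : ℝ) : ℂ) ^ p := by
    rw [← Complex.ofReal_pow, ← Real.exp_nat_mul]
    norm_num [mul_comm]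
  rw [← hb, ← hn, hexp, mul_pow]
  rw [mul_div_mul_left _ _ htne]
end

section
/- For every j ∈ ℕ and every real q > 0, setting s := (q·√(4+q²) + 2 + q²)/2, one has s^j · ∑_{k=0}^{j} ((−j)_k (1/2)_k / ((1/2−j)_k · k!)) · s^{−2k} = q^{2j} · ∑_{k=0}^{j} ((−j)_k (−j)_k / ((−2j)_k · k!)) · (−4/q²)^k. -/
/-- Ascending Pochhammer symbol `(a)_k = a (a+1) ⋯ (a+k-1)` over `ℝ`. -/
noncomputable def pochR (a : ℝ) (k : ℕ) : ℝ := ∏ i ∈ Finset.range k, (a + i)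


open Finset PowerSeries

section


noncomputable def cbR (n : ℕ) : ℝ := (Nat.centralBinom n : ℝ)

lemma Ab_succ (n : ℕ) : ((n : ℝ) + 1) * cbR (n + 1) = 2 * (2 * n + 1) * cbR n := by
  have := Nat.succ_mul_centralBinom_succ n
  have : ((n + 1) * Nat.centralBinom (n + 1) : ℝ) = (2 * (2 * n + 1) * Nat.centralBinom n : ℝ) := by
    exact_mod_cast congrArg (Nat.cast (R := ℝ)) this
  push_cast at this
  unfold cbR; push_cast; linarith

lemma twoT (n : ℕ) :
    2 * (∑ k ∈ range (n + 1), (k : ℝ) * cbR k * cbR (n - k)) = n * ∑ k ∈ range (n + 1), cbR k * cbR (n - k) := by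
  have h := Finset.sum_range_reflect (fun k => (k : ℝ) * cbR k * cbR (n - k)) (n + 1)
  -- h : ∑ j ∈ range (n+1), f (n - j) = ∑ k, f k   with f k = k * cbR k * cbR (n-k)
  rw [two_mul]
  nth_rewrite 1 [← h]
  rw [← Finset.sum_add_distrib, Finset.mul_sum]
  apply Finset.sum_congr rfl
  intro k hk
  have hkn : k ≤ n := Nat.lt_succ_iff.mp (Finset.mem_range.mp hk)
  have h1 : n + 1 - 1 - k = n - k := by omega
  have h2 : n - (n - k) = k := by omega
  rw [h1, h2]
  have : ((n - k : ℕ) : ℝ) = (n : ℝ) - k := by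
    have := Nat.cast_sub (R := ℝ) hkn; exact this
  rw [this]; ring

lemma fact1 (n : ℕ) : ∑ k ∈ range (n + 1), cbR k * cbR (n - k) = 4 ^ n := by
  induction n with
  | zero => simp [cbR, Nat.centralBinom]
  | succ n ih =>
    have hT : (∑ k ∈ range (n + 2), (k : ℝ) * cbR k * cbR (n + 1 - k))
        = 4 * (∑ k ∈ range (n + 1), (k : ℝ) * cbR k * cbR (n - k)) + 2 * ∑ k ∈ range (n + 1), cbR k * cbR (n - k) := by
      rw [Finset.sum_range_succ' (fun k => (k : ℝ) * cbR k * cbR (n + 1 - k)) (n + 1)]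
      simp only [Nat.cast_zero, zero_mul, add_zero]
      rw [Finset.mul_sum, Finset.mul_sum, ← Finset.sum_add_distrib]
      apply Finset.sum_congr rfl
      intro k hk
      have h1 : n + 1 - (k + 1) = n - k := by omega
      rw [h1]
      have h2 : ((k : ℝ) + 1) * cbR (k + 1) = 2 * (2 * k + 1) * cbR k := Ab_succ k
      have h3 : ((k:ℝ)+1) * cbR (k+1) * cbR (n-k) = 2*(2*(k:ℝ)+1) * cbR k * cbR (n-k) := by
        rw [h2]
      push_cast
      push_cast at h3
      linarith [h3]
    have h2T : 2 * (∑ k ∈ range (n + 2), (k : ℝ) * cbR k * cbR (n + 1 - k))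
        = (n + 1 : ℝ) * ∑ k ∈ range (n + 2), cbR k * cbR (n + 1 - k) := by
      have h := twoT (n + 1); push_cast at h ⊢; linarith [h]
    have h2Tn : 2 * (∑ k ∈ range (n + 1), (k : ℝ) * cbR k * cbR (n - k))
        = (n : ℝ) * ∑ k ∈ range (n + 1), cbR k * cbR (n - k) := twoT n
    have hpos : (n : ℝ) + 1 ≠ 0 := by positivity
    have : (n + 1 : ℝ) * ∑ k ∈ range (n + 2), cbR k * cbR (n + 1 - k)
        = (n + 1 : ℝ) * (4 * 4 ^ n) := by
      rw [← h2T, hT]; rw [ih] at h2Tn ⊢; nlinarith [h2Tn]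
    have := mul_left_cancel₀ hpos this
    rw [this]; ring


-- hockey stick
lemma hockey (r k : ℕ) : ∑ i ∈ range (k + 1), (i + r).choose r = (k + r + 1).choose (r + 1) := by
  induction k with
  | zero => simp
  | succ k ih =>
    rw [Finset.sum_range_succ, ih]
    have e : k + 1 + r = k + r + 1 := by omega
    rw [e]
    rw [Nat.choose_succ_succ (k + r + 1) r]
    simp only [Nat.succ_eq_add_one]
    omega

noncomputable def geo (c : ℝ) : ℝ⟦X⟧ := PowerSeries.mk (fun n => c ^ n)

lemma geo_inv (c : ℝ) : (1 - PowerSeries.C c * X) * geo c = 1 := by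
  ext n
  rw [sub_mul, one_mul, map_sub]
  cases n with
  | zero => simp [geo]
  | succ n =>
    rw [mul_assoc, PowerSeries.coeff_C_mul, PowerSeries.coeff_succ_X_mul]
    simp [geo, pow_succ]
    ring

lemma coeff_geo_pow (c : ℝ) (r : ℕ) : ∀ k, (PowerSeries.coeff k) ((geo c) ^ (r + 1))
    = ((k + r).choose r : ℝ) * c ^ k := by
  induction r with
  | zero => intro k; simp [geo]
  | succ r ih =>
    intro k
    rw [pow_succ, PowerSeries.coeff_mul, Finset.Nat.sum_antidiagonal_eq_sum_range_succ
      (fun a b => (PowerSeries.coeff a) ((geo c)^(r+1)) * (PowerSeries.coeff b) (geo c))]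
    simp only [ih]
    simp only [geo, coeff_mk]
    have : ∀ i ∈ range (k + 1), ((i + r).choose r : ℝ) * c ^ i * c ^ (k - i)
        = ((i + r).choose r : ℝ) * c ^ k := by
      intro i hi
      have : i ≤ k := Nat.lt_succ_iff.mp (Finset.mem_range.mp hi)
      rw [mul_assoc, ← pow_add, Nat.add_sub_cancel' this]
    rw [Finset.sum_congr rfl this, ← Finset.sum_mul, ← Nat.cast_sum, hockey]
    have e : k + r + 1 = k + (r + 1) := by omega
    rw [e]

end

-- the truncated central-binomial polynomial
noncomputable def cbPoly (N : ℕ) : Polynomial ℝ :=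
  ∑ m ∈ range (N + 1), Polynomial.monomial m (cbR m)

lemma cbPoly_coeff (N k : ℕ) :
    (cbPoly N).coeff k = if k ∈ range (N + 1) then cbR k else 0 := by
  rw [cbPoly, Polynomial.finset_sum_coeff]
  simp only [Polynomial.coeff_monomial]
  rw [Finset.sum_ite_eq' (range (N + 1)) k (fun m => cbR m)]

lemma cbPoly_sq_coeff (N d : ℕ) (hd : d ≤ N) :
    ((cbPoly N) * (cbPoly N)).coeff d = 4 ^ d := by
  rw [Polynomial.coeff_mul, Finset.Nat.sum_antidiagonal_eq_sum_range_succ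
    (fun a b => (cbPoly N).coeff a * (cbPoly N).coeff b)]
  rw [← fact1 d]
  apply Finset.sum_congr rfl
  intro k hk
  have hkd : k ≤ d := Nat.lt_succ_iff.mp (Finset.mem_range.mp hk)
  rw [cbPoly_coeff, cbPoly_coeff, if_pos, if_pos]
  · exact Finset.mem_range.mpr (by omega)
  · exact Finset.mem_range.mpr (by omega)

lemma cbPoly_key (N : ℕ) : (Polynomial.X : Polynomial ℝ) ^ (N + 1) ∣
    (cbPoly N) * (cbPoly N) * (1 - 4 * Polynomial.X) - 1 := by
  rw [Polynomial.X_pow_dvd_iff]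
  intro d hd
  have hdN : d ≤ N := by omega
  rw [Polynomial.coeff_sub, mul_sub, Polynomial.coeff_sub, mul_one]
  rw [cbPoly_sq_coeff N d hdN]
  have h4 : ((cbPoly N) * (cbPoly N) * (4 * Polynomial.X)).coeff d
      = if d = 0 then 0 else 4 * 4 ^ (d - 1) := by
    cases d with
    | zero =>
      rw [show (cbPoly N * cbPoly N * (4 * Polynomial.X)) = (cbPoly N * cbPoly N * 4) * Polynomial.X by ring]
      rw [Polynomial.coeff_mul_X_zero]
      simp
    | succ d =>
      rw [show (cbPoly N * cbPoly N * (4 * Polynomial.X)) = (cbPoly N * cbPoly N * 4) * Polynomial.X by ring]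
      rw [Polynomial.coeff_mul_X]
      simp only [Nat.succ_ne_zero, if_false]
      rw [show (cbPoly N * cbPoly N * 4) = 4 * (cbPoly N * cbPoly N) by ring]
      rw [Polynomial.coeff_ofNat_mul]
      rw [cbPoly_sq_coeff N d (by omega)]
      simp
  rw [h4]
  cases d with
  | zero => simp
  | succ d =>
    simp only [Nat.succ_ne_zero, if_false, Polynomial.coeff_one, Nat.succ_sub_one] at h4 ⊢
    rw [pow_succ]
    ring

section Gside

variable (s : ℝ)

noncomputable def uu : ℝ := (s - 1) ^ 2

/-- coefficients of the RHS series -/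
noncomputable def Rc (n : ℕ) : ℝ :=
  ∑ m ∈ range (n + 1), cbR m * (uu s) ^ m * ((n + m).choose (2 * m) : ℝ) * (4 * s) ^ (n - m)

noncomputable def Gs : ℝ⟦X⟧ := PowerSeries.mk (Rc s)

noncomputable def Dinv : ℝ⟦X⟧ := geo (4 * s)

noncomputable def Zs : ℝ⟦X⟧ := PowerSeries.C (uu s) * (X * (Dinv s) ^ 2)

noncomputable def SN (N : ℕ) : ℝ⟦X⟧ := ∑ m ∈ range (N + 1), PowerSeries.C (cbR m) * (Zs s) ^ m

noncomputable def TT (N : ℕ) : ℝ⟦X⟧ := Dinv s * SN s N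

lemma coeff_term (m n : ℕ) :
    (PowerSeries.coeff n) (Dinv s * (PowerSeries.C (cbR m) * (Zs s) ^ m))
      = if m ≤ n then cbR m * (uu s) ^ m * ((n + m).choose (2 * m) : ℝ) * (4 * s) ^ (n - m) else 0 := by
  have hz : (Zs s) ^ m = PowerSeries.C ((uu s) ^ m) * (X ^ m * (Dinv s) ^ (2 * m)) := by
    rw [Zs, mul_pow, mul_pow, ← map_pow, ← pow_mul]
  have : Dinv s * (PowerSeries.C (cbR m) * (Zs s) ^ m)
      = PowerSeries.C (cbR m * (uu s) ^ m) * (X ^ m * (Dinv s) ^ (2 * m + 1)) := by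
    rw [hz, map_mul]; ring
  rw [this, PowerSeries.coeff_C_mul, PowerSeries.coeff_X_pow_mul']
  by_cases hmn : m ≤ n
  · rw [if_pos hmn, if_pos hmn]
    have h2m : 2 * m + 1 = (2 * m) + 1 := rfl
    rw [Dinv, coeff_geo_pow (4 * s) (2 * m) (n - m)]
    have : n - m + 2 * m = n + m := by omega
    rw [this]
    ring
  · rw [if_neg hmn, if_neg hmn, mul_zero]

lemma coeff_TT (N n : ℕ) (h : n ≤ N) : (PowerSeries.coeff n) (TT s N) = Rc s n := by
  rw [TT, SN, Finset.mul_sum, map_sum]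
  rw [Rc]
  rw [Finset.sum_congr rfl (fun m _ => coeff_term s m n)]
  rw [← Finset.sum_subset (Finset.range_subset_range.mpr (show n + 1 ≤ N + 1 by omega))
    (fun x _ hx => if_neg (by simp only [Finset.mem_range, Nat.lt_succ_iff] at hx ⊢; omega))]
  apply Finset.sum_congr rfl
  intro m hm
  exact if_pos (Nat.lt_succ_iff.mp (Finset.mem_range.mp hm))

end Gside
section Fside

variable (s : ℝ)

noncomputable def Lc (n : ℕ) : ℝ := ∑ k ∈ range (n + 1), cbR k * cbR (n - k) * (s ^ 2) ^ (n - k)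

noncomputable def Fs : ℝ⟦X⟧ := (PowerSeries.mk cbR) * (PowerSeries.mk fun n => cbR n * (s ^ 2) ^ n)

lemma coeff_Fs (n : ℕ) : (PowerSeries.coeff n) (Fs s) = Lc s n := by
  rw [Fs, PowerSeries.coeff_mul, Finset.Nat.sum_antidiagonal_eq_sum_range_succ
    (fun a b => (PowerSeries.coeff a) (PowerSeries.mk cbR)
      * (PowerSeries.coeff b) (PowerSeries.mk fun n => cbR n * (s ^ 2) ^ n)), Lc]
  simp only [coeff_mk]
  apply Finset.sum_congr rfl
  intro k _
  ring

lemma mkcb_sq : (PowerSeries.mk cbR) * (PowerSeries.mk cbR) = geo 4 := by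
  ext n
  rw [PowerSeries.coeff_mul, Finset.Nat.sum_antidiagonal_eq_sum_range_succ
    (fun a b => (PowerSeries.coeff a) (PowerSeries.mk cbR) * (PowerSeries.coeff b) (PowerSeries.mk cbR))]
  simp only [coeff_mk, geo]
  exact fact1 n

lemma mkcbs_sq : (PowerSeries.mk fun n => cbR n * (s ^ 2) ^ n) * (PowerSeries.mk fun n => cbR n * (s ^ 2) ^ n) = geo (4 * s ^ 2) := by
  ext n
  rw [PowerSeries.coeff_mul, Finset.Nat.sum_antidiagonal_eq_sum_range_succ
    (fun a b => (PowerSeries.coeff a) (PowerSeries.mk fun n => cbR n * (s ^ 2) ^ n)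
      * (PowerSeries.coeff b) (PowerSeries.mk fun n => cbR n * (s ^ 2) ^ n))]
  simp only [coeff_mk, geo]
  have : ∀ k ∈ range (n + 1), cbR k * (s ^ 2) ^ k * (cbR (n - k) * (s ^ 2) ^ (n - k))
      = cbR k * cbR (n - k) * (s ^ 2) ^ n := by
    intro k hk
    have hkn : k ≤ n := Nat.lt_succ_iff.mp (Finset.mem_range.mp hk)
    rw [show cbR k * (s ^ 2) ^ k * (cbR (n - k) * (s ^ 2) ^ (n - k))
      = cbR k * cbR (n - k) * ((s ^ 2) ^ k * (s ^ 2) ^ (n - k)) by ring, ← pow_add,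
      Nat.add_sub_cancel' hkn]
  rw [Finset.sum_congr rfl this, ← Finset.sum_mul, fact1, mul_pow]

noncomputable def Es : ℝ⟦X⟧ := (1 - PowerSeries.C 4 * X) * (1 - PowerSeries.C (4 * s ^ 2) * X)

lemma Fs_sq : (Fs s) * (Fs s) * (Es s) = 1 := by
  have h1 := geo_inv 4
  have h2 := geo_inv (4 * s ^ 2)
  have : (Fs s) * (Fs s) * (Es s)
      = ((1 - PowerSeries.C 4 * X) * geo 4) * ((1 - PowerSeries.C (4 * s ^ 2) * X) * geo (4 * s ^ 2)) := by
    rw [← mkcb_sq, ← mkcbs_sq s, Fs, Es]; ring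
  rw [this, h1, h2, one_mul]

end Fside

-- square root uniqueness
lemma sq_unique (P Q : ℝ⟦X⟧) (hP : PowerSeries.constantCoeff P = 1)
    (hQ : PowerSeries.constantCoeff Q = 1) (h : P * P = Q * Q) : P = Q := by
  have : (P - Q) * (P + Q) = 0 := by ring_nf; rw [show P^2 = P*P by ring, h]; ring
  rcases mul_eq_zero.mp this with h0 | h0
  · exact sub_eq_zero.mp h0
  · exfalso
    have := congrArg (PowerSeries.constantCoeff) h0
    rw [map_add, hP, hQ, map_zero] at this
    norm_num at this



section Main

variable (s : ℝ)

lemma agree_mul (n : ℕ) (P Q W : ℝ⟦X⟧) (h : ∀ k ≤ n, PowerSeries.coeff k P = PowerSeries.coeff k Q)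
    (m : ℕ) (hm : m ≤ n) : PowerSeries.coeff m (P * W) = PowerSeries.coeff m (Q * W) := by
  rw [PowerSeries.coeff_mul, PowerSeries.coeff_mul]
  apply Finset.sum_congr rfl
  intro p hp
  have := Finset.HasAntidiagonal.mem_antidiagonal.mp hp
  rw [h p.1 (by omega)]

lemma Es_eq : Es s = (1 - PowerSeries.C (4 * s) * X) ^ 2 - PowerSeries.C (4 * uu s) * X := by
  rw [Es, uu]
  have h4 : PowerSeries.C (4 : ℝ) = (4 : ℝ⟦X⟧) := by
    exact map_ofNat _ 4
  have e1 : PowerSeries.C (4 * s ^ 2) = 4 * (PowerSeries.C s) ^ 2 := by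
    rw [map_mul, map_pow, h4]
  have e2 : PowerSeries.C (4 * s) = 4 * PowerSeries.C s := by rw [map_mul, h4]
  have e3 : PowerSeries.C (4 * (s - 1) ^ 2) = 4 * (PowerSeries.C s - 1) ^ 2 := by
    rw [map_mul, map_pow, map_sub, map_one, h4]
  rw [e1, e2, e3, h4]
  ring

lemma TT_sq (N : ℕ) :
    TT s N * TT s N * Es s = SN s N * SN s N * (1 - 4 * Zs s) := by
  have hD : (1 - PowerSeries.C (4 * s) * X) * Dinv s = 1 := geo_inv (4 * s)
  have h4u : PowerSeries.C (4 * uu s) = 4 * PowerSeries.C (uu s) := by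
    rw [map_mul, map_ofNat]
  rw [TT, Es_eq, h4u]
  have hZ : 4 * Zs s = 4 * PowerSeries.C (uu s) * X * (Dinv s) ^ 2 := by
    rw [Zs]; ring
  calc Dinv s * SN s N * (Dinv s * SN s N) *
        ((1 - PowerSeries.C (4 * s) * X) ^ 2 - 4 * PowerSeries.C (uu s) * X)
      = SN s N * SN s N * (((1 - PowerSeries.C (4 * s) * X) * Dinv s) ^ 2
          - 4 * PowerSeries.C (uu s) * X * (Dinv s) ^ 2) := by ring
    _ = SN s N * SN s N * (1 - 4 * Zs s) := by rw [hD, hZ]; ring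

lemma SN_one (N n : ℕ) (h : n ≤ N) :
    PowerSeries.coeff n (SN s N * SN s N * (1 - 4 * Zs s)) = PowerSeries.coeff n 1 := by
  obtain ⟨r, hr⟩ := cbPoly_key N
  have φeq : Polynomial.aeval (Zs s) (cbPoly N) = SN s N := by
    rw [cbPoly, map_sum, SN]
    apply Finset.sum_congr rfl
    intro m _
    rw [Polynomial.aeval_monomial]
    rfl
  have h := congrArg (Polynomial.aeval (Zs s)) hr
  simp only [map_sub, map_mul, map_one, map_pow, Polynomial.aeval_X, map_ofNat, φeq] at h
  have key : SN s N * SN s N * (1 - 4 * Zs s) = 1 + Zs s ^ (N + 1) * Polynomial.aeval (Zs s) r := by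
    rw [← h]; ring
  rw [key, map_add]
  have hz : PowerSeries.coeff n (Zs s ^ (N + 1) * Polynomial.aeval (Zs s) r) = 0 := by
    have hzz : Zs s ^ (N + 1) * Polynomial.aeval (Zs s) r
        = X ^ (N + 1) * (PowerSeries.C ((uu s) ^ (N + 1)) * (Dinv s) ^ (2 * (N + 1)) * Polynomial.aeval (Zs s) r) := by
      rw [Zs, mul_pow, mul_pow, ← map_pow, ← pow_mul]
      ring
    rw [hzz, PowerSeries.coeff_X_pow_mul', if_neg (by omega)]
  rw [hz, add_zero]

lemma Gs_sq_Es : Gs s * Gs s * Es s = 1 := by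
  ext n
  have hagree : ∀ k ≤ n, PowerSeries.coeff k (Gs s) = PowerSeries.coeff k (TT s n) := by
    intro k hk
    rw [Gs, coeff_mk, coeff_TT s n k hk]
  have hsq : ∀ k ≤ n, PowerSeries.coeff k (Gs s * Gs s) = PowerSeries.coeff k (TT s n * TT s n) := by
    intro k hk
    rw [agree_mul n (Gs s) (TT s n) (Gs s) hagree k hk, mul_comm (TT s n) (Gs s),
      mul_comm (TT s n) (TT s n)]
    exact agree_mul n (Gs s) (TT s n) (TT s n) hagree k hk
  rw [agree_mul n (Gs s * Gs s) (TT s n * TT s n) (Es s) hsq n le_rfl, TT_sq, SN_one s n n le_rfl]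

lemma Fs_eq_Gs : Fs s = Gs s := by
  have hE : Es s ≠ 0 := by
    intro h
    have := congrArg (PowerSeries.constantCoeff) h
    rw [Es, map_mul, map_zero] at this
    simp at this
  have hsq : Fs s * Fs s = Gs s * Gs s := by
    have h1 : Fs s * Fs s * Es s = Gs s * Gs s * Es s := by rw [Fs_sq, Gs_sq_Es]
    exact mul_right_cancel₀ hE h1
  apply sq_unique _ _ _ _ hsq
  · have := coeff_Fs s 0
    rw [PowerSeries.coeff_zero_eq_constantCoeff] at this
    rw [this, Lc]
    simp [cbR, Nat.centralBinom]
  · rw [Gs]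
    rw [← PowerSeries.coeff_zero_eq_constantCoeff, coeff_mk, Rc]
    simp [cbR, Nat.centralBinom]

lemma L_eq_R (n : ℕ) : Lc s n = Rc s n := by
  have := congrArg (PowerSeries.coeff n) (Fs_eq_Gs s)
  rw [coeff_Fs, Gs, coeff_mk] at this
  exact this

end Main

section Poch

lemma pochR_zero (a : ℝ) : pochR a 0 = 1 := Finset.prod_range_zero _

lemma pochR_succ (a : ℝ) (k : ℕ) : pochR a (k + 1) = pochR a k * (a + k) :=
  Finset.prod_range_succ _ _

lemma factR_pos (n : ℕ) : (0:ℝ) < (n.factorial : ℝ) := by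
  exact_mod_cast Nat.factorial_pos n

lemma cbR_pos (n : ℕ) : (0:ℝ) < cbR n := by
  unfold cbR; exact_mod_cast Nat.centralBinom_pos n

lemma cbR_cast (m : ℕ) : cbR m = ((2*m).factorial : ℝ) / ((m.factorial : ℝ) * (m.factorial : ℝ)) := by
  have h := Nat.choose_mul_factorial_mul_factorial (show m ≤ 2*m by omega)
  have h2 : 2*m - m = m := by omega
  rw [h2] at h
  have : ((2*m).choose m * m.factorial * m.factorial : ℝ) = ((2*m).factorial : ℝ) := by
    exact_mod_cast congrArg (Nat.cast (R := ℝ)) h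
  unfold cbR Nat.centralBinom
  field_simp
  linarith [this]

lemma dF_cast (j k : ℕ) (h : k ≤ j) :
    (j.descFactorial k : ℝ) = (j.factorial : ℝ) / ((j-k).factorial : ℝ) := by
  have hh := Nat.factorial_mul_descFactorial h
  have : (((j-k).factorial * j.descFactorial k : ℕ) : ℝ) = (j.factorial : ℝ) := by
    exact_mod_cast congrArg (Nat.cast (R := ℝ)) hh
  push_cast at this
  field_simp
  linarith [this]

lemma choose_cast (n k : ℕ) (h : k ≤ n) :
    (n.choose k : ℝ) = (n.factorial : ℝ) / ((k.factorial : ℝ) * ((n-k).factorial : ℝ)) := by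
  have hh := Nat.choose_mul_factorial_mul_factorial h
  have : ((n.choose k * k.factorial * (n-k).factorial : ℕ) : ℝ) = (n.factorial : ℝ) := by
    exact_mod_cast congrArg (Nat.cast (R := ℝ)) hh
  push_cast at this
  field_simp
  linarith [this]

lemma poch_neg (j : ℕ) : ∀ k, k ≤ j → pochR (-(j:ℝ)) k = (-1)^k * (j.descFactorial k : ℝ) := by
  intro k
  induction k with
  | zero => intro _; simp [pochR_zero]
  | succ k ih =>
    intro hk
    rw [pochR_succ, ih (by omega), Nat.descFactorial_succ]
    have hc : ((j - k : ℕ) : ℝ) = (j : ℝ) - k := by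
      rw [Nat.cast_sub (by omega)]
    push_cast
    rw [hc]
    ring

lemma poch_half (k : ℕ) : pochR (1/2 : ℝ) k = ((2*k).factorial : ℝ) / (4^k * (k.factorial : ℝ)) := by
  induction k with
  | zero => simp [pochR_zero]
  | succ k ih =>
    rw [pochR_succ, ih]
    have h1 : 2*(k+1) = (2*k+1) + 1 := by omega
    rw [h1, Nat.factorial_succ (2*k+1), Nat.factorial_succ (2*k), Nat.factorial_succ k]
    have h4 : (0:ℝ) < 4^k := by positivity
    have hf := factR_pos k
    have hf2 := factR_pos (2*k)
    field_simp
    push_cast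
    ring

lemma poch_half_sub (j : ℕ) : ∀ k, k ≤ j → pochR (1/2 - (j:ℝ)) k
    = (-1)^k * ((2*j).factorial : ℝ) * ((j-k).factorial : ℝ)
      / (4^k * (j.factorial : ℝ) * ((2*(j-k)).factorial : ℝ)) := by
  intro k
  induction k with
  | zero =>
    intro _
    have h1 := (factR_pos j).ne'
    have h2 := (factR_pos (2*j)).ne'
    simp [pochR_zero]
    field_simp
  | succ k ih =>
    intro hk
    obtain ⟨d, hd⟩ : ∃ d, j - k = d + 1 := ⟨j - k - 1, by omega⟩
    have hdk : j - (k+1) = d := by omega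
    rw [pochR_succ, ih (by omega), hd, hdk]
    have h2d : 2*(d+1) = (2*d+1)+1 := by omega
    rw [h2d, Nat.factorial_succ (2*d+1), Nat.factorial_succ (2*d), Nat.factorial_succ d]
    have hcast : (j : ℝ) - k = (d : ℝ) + 1 := by
      have : ((j - k : ℕ) : ℝ) = (j:ℝ) - k := by rw [Nat.cast_sub (by omega)]
      rw [← this, hd]; push_cast; ring
    have h4 : (0:ℝ) < 4^k := by positivity
    have hfj := factR_pos j
    have hfd := factR_pos d
    have hf2d := factR_pos (2*d)
    have : (1/2 : ℝ) - j + k = -(2*(d:ℝ)+1)/2 := by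
      have : (j:ℝ) = (d:ℝ) + 1 + k := by linarith [hcast]
      rw [this]; ring
    rw [this]
    field_simp
    push_cast
    ring

end Poch

section Terms

lemma term_L (j k : ℕ) (h : k ≤ j) (s : ℝ) (hs0 : 0 < s) :
    s ^ j * (pochR (-(j:ℝ)) k * pochR (1/2) k /
        (pochR (1/2 - (j:ℝ)) k * (Nat.factorial k : ℝ)) * s ^ (-(2 * (k:ℤ)))) * (cbR j * s ^ j)
      = cbR k * cbR (j - k) * (s ^ 2) ^ (j - k) := by
  obtain ⟨m, rfl⟩ : ∃ m, j = k + m := ⟨j - k, by omega⟩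
  have hsub : k + m - k = m := by omega
  rw [hsub]
  rw [poch_neg (k+m) k (by omega), poch_half k, poch_half_sub (k+m) k (by omega),
    dF_cast (k+m) k (by omega), hsub, cbR_cast, cbR_cast, cbR_cast]
  have hz : s ^ (-(2 * (k:ℤ))) = (s ^ (2*k : ℕ))⁻¹ := by
    rw [zpow_neg]
    norm_cast
  rw [hz]
  have hsne : s ≠ 0 := ne_of_gt hs0
  have h1 := (factR_pos k).ne'
  have h2 := (factR_pos m).ne'
  have h3 := (factR_pos (k+m)).ne'
  have h4 := (factR_pos (2*k)).ne'
  have h5 := (factR_pos (2*m)).ne'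
  have h6 := (factR_pos (2*(k+m))).ne'
  have h7 : ((-1:ℝ))^k ≠ 0 := by
    intro hc; have := pow_eq_zero_iff (n := k) (M₀ := ℝ) ?_ |>.mp hc <;> norm_num at *
  have h8 : (4:ℝ)^k ≠ 0 := by positivity
  field_simp
  ring

lemma term_R (j k : ℕ) (h : k ≤ j) (s q : ℝ) (hq0 : 0 < q) (hs1 : 1 < s)
    (hqs : q^2 * s = (s-1)^2) :
    q ^ (2*j) * (pochR (-(j:ℝ)) k * pochR (-(j:ℝ)) k /
        (pochR (-2 * (j:ℝ)) k * (Nat.factorial k : ℝ)) * (-4/q^2) ^ k) * (cbR j * s ^ j)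
      = cbR (j-k) * (uu s) ^ (j-k) * (((j + (j-k)).choose (2*(j-k)) : ℕ) : ℝ) * (4*s) ^ k := by
  have hsne : s ≠ 0 := by linarith
  have hs10 : s - 1 ≠ 0 := by intro hc; rw [sub_eq_zero] at hc; linarith [hc]
  have hq2 : q^2 = (s-1)^2 / s := by field_simp; linarith [hqs]
  have hneg2 : (-2 * (j:ℝ)) = -(((2*j : ℕ) : ℝ)) := by push_cast; ring
  obtain ⟨m, rfl⟩ : ∃ m, j = k + m := ⟨j - k, by omega⟩
  have hsub : k + m - k = m := by omega
  have hsub2 : k + m + m = k + 2*m := by omega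
  rw [hsub, hneg2, poch_neg (k+m) k (by omega), poch_neg (2*(k+m)) k (by omega),
    dF_cast (k+m) k (by omega), dF_cast (2*(k+m)) k (by omega), hsub, hsub2]
  rw [choose_cast (k+2*m) (2*m) (by omega)]
  have hsub3 : k + 2*m - 2*m = k := by omega
  have hsub4 : 2*(k+m) - k = k + 2*m := by omega
  rw [hsub3, hsub4, cbR_cast, cbR_cast, uu]
  rw [pow_mul q 2 (k+m)]
  rw [show ((-4:ℝ)/q^2) = -1 * (4/q^2) by ring, mul_pow]
  rw [hq2]
  have h1 := (factR_pos k).ne'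
  have h2 := (factR_pos m).ne'
  have h3 := (factR_pos (k+m)).ne'
  have h4 := (factR_pos (2*m)).ne'
  have h5 := (factR_pos (k+2*m)).ne'
  have h6 := (factR_pos (2*(k+m))).ne'
  have h7 : ((-1:ℝ))^k ≠ 0 := by
    intro hc; have := pow_eq_zero_iff (n := k) (M₀ := ℝ) ?_ |>.mp hc <;> norm_num at *
  have hE : ((-1:ℝ))^k * (-1)^k = 1 := by
    rw [← pow_add]
    exact Even.neg_one_pow ⟨k, rfl⟩
  rw [show 2*(k+m) = k*2 + m*2 by ring]
  rw [show k + 2*m = k + m*2 by ring]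
  rw [show 2*m = m*2 by ring]
  field_simp
  rw [show ((-1:ℝ)^k)^2 = 1 by rw [sq]; exact hE, mul_one, div_pow, div_pow]
  field_simp
  ring

end Terms

/-- The 2-point AdS vertex function coincides with the bulk-to-bulk propagator on a
constant-`ρ` slice: instance of the quadratic hypergeometric transformation. -/
theorem stmt_12 (j : ℕ) (q : ℝ) (hq : 0 < q) (s : ℝ)
    (hs : s = (q * Real.sqrt (4 + q ^ 2) + 2 + q ^ 2) / 2) :
    s ^ j *
        ∑ k ∈ Finset.range (j + 1),
          pochR (-(j : ℝ)) k * pochR (1 / 2) k /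
              (pochR (1 / 2 - j) k * (Nat.factorial k : ℝ)) * s ^ (-(2 * k : ℤ)) =
      q ^ (2 * j) *
        ∑ k ∈ Finset.range (j + 1),
          pochR (-(j : ℝ)) k * pochR (-(j : ℝ)) k /
              (pochR (-2 * j) k * (Nat.factorial k : ℝ)) * (-4 / q ^ 2) ^ k := by
  have ht : Real.sqrt (4 + q^2) ^ 2 = 4 + q^2 := Real.sq_sqrt (by positivity)
  have htpos : 0 < Real.sqrt (4 + q^2) := Real.sqrt_pos.mpr (by positivity)
  have hs1 : 1 < s := by
    rw [hs]; nlinarith [mul_pos hq htpos, sq_nonneg q]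
  have hs0 : 0 < s := by linarith
  have hqs : q^2 * s = (s-1)^2 := by
    rw [hs]; nlinarith [ht]
  have hc : cbR j * s ^ j ≠ 0 := ne_of_gt (mul_pos (cbR_pos j) (pow_pos hs0 j))
  apply mul_right_cancel₀ hc
  have hL : (s ^ j * ∑ k ∈ Finset.range (j + 1),
        pochR (-(j : ℝ)) k * pochR (1 / 2) k /
          (pochR (1 / 2 - j) k * (Nat.factorial k : ℝ)) * s ^ (-(2 * k : ℤ))) * (cbR j * s ^ j)
      = Lc s j := by
    rw [Finset.mul_sum, Finset.sum_mul, Lc]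
    refine Finset.sum_congr rfl ?_
    intro k hk
    exact term_L j k (Nat.lt_succ_iff.mp (Finset.mem_range.mp hk)) s hs0
  have hR : (q ^ (2 * j) * ∑ k ∈ Finset.range (j + 1),
        pochR (-(j : ℝ)) k * pochR (-(j : ℝ)) k /
          (pochR (-2 * j) k * (Nat.factorial k : ℝ)) * (-4 / q ^ 2) ^ k) * (cbR j * s ^ j)
      = Rc s j := by
    have hrefl := Finset.sum_range_reflect
      (fun i => cbR i * (uu s) ^ i * (((j + i).choose (2*i) : ℕ) : ℝ) * (4*s)^(j-i)) (j+1)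
    rw [Finset.mul_sum, Finset.sum_mul, Rc, ← hrefl]
    refine Finset.sum_congr rfl ?_
    intro k hk
    have hkj : k ≤ j := Nat.lt_succ_iff.mp (Finset.mem_range.mp hk)
    have e1 : j + 1 - 1 - k = j - k := by omega
    simp only [e1]
    have e2 : j - (j - k) = k := by omega
    rw [e2]
    exact term_R j k hkj s q hq hs1 hqs
  rw [hL, hR]
  exact L_eq_R s j
end

section
/- Let j₁, j₂, j₃ ∈ ℕ satisfy the triangle inequalities |j₁−j₂| ≤ j₃ ≤ j₁+j₂, and let z₁, z₂, z₃ be pairwise distinct complex numbers and ρ ∈ ℝ. Then ∑_{m₁=−j₁}^{j₁} ∑_{m₂=−j₂}^{j₂} ∑_{m₃=−j₃}^{j₃} [I_{j₁j₂j₃}]^{m₁}{}_{m₂m₃} · ⟨ã₁|j₁,m₁⟩ · ⟨j₂,m₂|ã₂⟩ · ⟨j₃,m₃|ã₃⟩ = C(j₁,j₂,j₃) · e^{ρ(j₁+j₂+j₃)} · (z₁−z₂)^{j₁+j₂−j₃} · (z₁−z₃)^{j₁+j₃−j₂} · (z₂−z₃)^{j₂+j₃−j₁}, where ⟨ã₁|j₁,m₁⟩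 := (−1)^{j₁+m₁}·A(j₁,m₁)·z₁^{j₁+m₁}·e^{ρj₁} and ⟨j_i,m_i|ã_i⟩ := A(j_i,m_i)·z_i^{j_i−m_i}·e^{ρj_i} for i = 2,3. -/
/-- `x!` for an integer `x` (the arguments used below are non-negative). -/
noncomputable def zfact (x : ℤ) : ℝ := (Nat.factorial x.toNat : ℝ)

/-- `A(j,m) = √((2j)! / ((j+m)!(j-m)!))`. -/
noncomputable def wA (j m : ℤ) : ℝ :=
  Real.sqrt (zfact (2 * j) / (zfact (j + m) * zfact (j - m)))

/-- The 3-valent `sl(2)` intertwiner `[I_{j₁j₂j₃}]^{m₁}{}_{m₂m₃}` (eq. (A.2)). -/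
noncomputable def wI (j₁ j₂ j₃ m₁ m₂ m₃ : ℤ) : ℝ :=
  if m₁ = m₂ + m₃ then
    (-1 : ℝ) ^ (j₂ + m₁ - m₃) *
      Real.sqrt (zfact (-j₁ + j₂ + j₃) * zfact (j₁ + j₂ - j₃) * zfact (j₁ - j₂ + j₃) *
          zfact (j₁ + m₁) * zfact (j₁ - m₁) / zfact (j₁ + j₂ + j₃ + 1)) *
      ∑ k ∈ Finset.Icc (max 0 (max (m₂ + j₁ - j₃) (m₁ + j₂ - j₃)))
          (min (m₂ + j₂) (min (m₁ + j₁) (j₁ + j₂ - j₃))),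
        (-1 : ℝ) ^ k *
          Real.sqrt (zfact (j₂ + m₂) * zfact (j₂ - m₂) * zfact (j₃ + m₃) * zfact (j₃ - m₃)) /
          (zfact k * zfact (j₁ + m₁ - k) * zfact (j₂ + m₂ - k) * zfact (j₁ + j₂ - j₃ - k) *
            zfact (j₃ - j₁ - m₂ + k) * zfact (j₃ - j₂ - m₁ + k))
  else 0

/-- Modified triangle coefficient `Δ(a,b,c)`. -/
noncomputable def wΔ (a b c : ℤ) : ℝ :=
  zfact (a + b + c + 1) * zfact (a + b - c) * zfact (a + c - b) * zfact (b + c - a)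

/-- Structure constant `C(j₁,j₂,j₃) = √((2j₁)!(2j₂)!(2j₃)!/Δ(j₁,j₂,j₃))`. -/
noncomputable def wC (a b c : ℤ) : ℝ :=
  Real.sqrt (zfact (2 * a) * zfact (2 * b) * zfact (2 * c) / wΔ a b c)

lemma zfact_eq (x : ℤ) (n : ℕ) (h : x.toNat = n) : zfact x = (Nat.factorial n : ℝ) := by
  unfold zfact; rw [h]

lemma n1pow (m n : ℕ) (h : m % 2 = n % 2) : (-1:ℂ)^m = (-1:ℂ)^n := by
  rw [← Nat.div_add_mod m 2, ← Nat.div_add_mod n 2, pow_add, pow_add, pow_mul, pow_mul]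
  norm_num [h]

open Nat in
lemma magic_nat (a b c p q r : ℕ) (hp : p ≤ a) (hq : q ≤ b) (hr : r ≤ c) :
    (a ! * b ! * c ! : ℕ) =
      (a.choose p * b.choose q * c.choose r) *
        (p ! * q ! * (c - r)! * (a - p)! * r ! * (b - q)!) := by
  rw [← Nat.choose_mul_factorial_mul_factorial hp, ← Nat.choose_mul_factorial_mul_factorial hq,
    ← Nat.choose_mul_factorial_mul_factorial hr]
  ring

open Nat in
lemma magic (a b c p q r : ℕ) (hp : p ≤ a) (hq : q ≤ b) (hr : r ≤ c) :
    Real.sqrt ((c ! : ℝ) * a ! * b ! * (p + q)! * ((a - p) + (b - q))! / (a + b + c + 1)!) *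
        ((Real.sqrt (((c - r) + p)! * ((a - p) + r)! * (q + r)! * ((b - q) + (c - r))! : ℝ)) /
          ((p ! : ℝ) * q ! * (c - r)! * (a - p)! * r ! * (b - q)!)) *
        Real.sqrt (((a + b)! : ℝ) / ((p + q)! * ((a - p) + (b - q))!)) *
        Real.sqrt (((a + c)! : ℝ) / ((((c - r) + p)! : ℝ) * ((a - p) + r)!)) *
        Real.sqrt (((b + c)! : ℝ) / (((q + r)! : ℝ) * ((b - q) + (c - r))!)) =
      Real.sqrt ((((a + b)! : ℝ) * (a + c)! * (b + c)!) / ((a + b + c + 1)! * a ! * b ! * c !)) *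
        (a.choose p) * (b.choose q) * (c.choose r) := by
  have f0 : ∀ n : ℕ, (0:ℝ) < n ! := fun n => by exact_mod_cast n.factorial_pos
  set W : ℝ := (((a + b)! : ℝ) * (a + c)! * (b + c)!) / ((a + b + c + 1)! * a ! * b ! * c !) with hW
  have hWn : (0:ℝ) ≤ W := by positivity
  have key : ((c ! : ℝ) * a ! * b ! * (p + q)! * ((a - p) + (b - q))! / (a + b + c + 1)!) *
      ((((c - r) + p)! * ((a - p) + r)! * (q + r)! * ((b - q) + (c - r))! : ℝ)) *
      (((a + b)! : ℝ) / ((p + q)! * ((a - p) + (b - q))!)) *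
      (((a + c)! : ℝ) / ((((c - r) + p)! : ℝ) * ((a - p) + r)!)) *
      (((b + c)! : ℝ) / (((q + r)! : ℝ) * ((b - q) + (c - r))!)) =
      W * ((a ! * b ! * c ! : ℕ) : ℝ) ^ 2 := by
    rw [hW]; push_cast; field_simp
  have hD : ((p ! : ℝ) * q ! * (c - r)! * (a - p)! * r ! * (b - q)!) ≠ 0 := by positivity
  have h2 : Real.sqrt ((c ! : ℝ) * a ! * b ! * (p + q)! * ((a - p) + (b - q))! / (a + b + c + 1)!) *
      Real.sqrt ((((c - r) + p)! * ((a - p) + r)! * (q + r)! * ((b - q) + (c - r))! : ℝ)) *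
      Real.sqrt (((a + b)! : ℝ) / ((p + q)! * ((a - p) + (b - q))!)) *
      Real.sqrt (((a + c)! : ℝ) / ((((c - r) + p)! : ℝ) * ((a - p) + r)!)) *
      Real.sqrt (((b + c)! : ℝ) / (((q + r)! : ℝ) * ((b - q) + (c - r))!)) =
      Real.sqrt W * ((a ! * b ! * c ! : ℕ) : ℝ) := by
    rw [← Real.sqrt_mul (by positivity), ← Real.sqrt_mul (by positivity),
      ← Real.sqrt_mul (by positivity), ← Real.sqrt_mul (by positivity), key,
      Real.sqrt_mul hWn, Real.sqrt_sq (by positivity)]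
  have hN : ((a ! * b ! * c ! : ℕ) : ℝ) =
      ((a.choose p : ℝ) * b.choose q * c.choose r) *
        ((p ! : ℝ) * q ! * (c - r)! * (a - p)! * r ! * (b - q)!) := by
    exact_mod_cast congrArg (Nat.cast : ℕ → ℝ) (magic_nat a b c p q r hp hq hr)
  calc _ = (Real.sqrt ((c ! : ℝ) * a ! * b ! * (p + q)! * ((a - p) + (b - q))! / (a + b + c + 1)!) *
      Real.sqrt ((((c - r) + p)! * ((a - p) + r)! * (q + r)! * ((b - q) + (c - r))! : ℝ)) *
      Real.sqrt (((a + b)! : ℝ) / ((p + q)! * ((a - p) + (b - q))!)) *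
      Real.sqrt (((a + c)! : ℝ) / ((((c - r) + p)! : ℝ) * ((a - p) + r)!)) *
      Real.sqrt (((b + c)! : ℝ) / (((q + r)! : ℝ) * ((b - q) + (c - r))!))) /
        ((p ! : ℝ) * q ! * (c - r)! * (a - p)! * r ! * (b - q)!) := by ring
    _ = _ := by rw [h2, hN]; field_simp

/-- The per-`(m₂,m₃,k)` summand of the Wilson network, after resolving the `δ` and
distributing the `k`-sum of the intertwiner. -/
noncomputable def Gfun (j₁ j₂ j₃ : ℕ) (z₁ z₂ z₃ : ℂ) (ρ : ℝ) (y : (ℤ × ℤ) × ℤ) (k : ℤ) : ℂ :=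
  ((-1 : ℝ) ^ ((j₂ : ℤ) + y.1.1 - y.2) *
      Real.sqrt (zfact (-(j₁ : ℤ) + j₂ + j₃) * zfact ((j₁ : ℤ) + j₂ - j₃) *
          zfact ((j₁ : ℤ) - j₂ + j₃) * zfact ((j₁ : ℤ) + y.1.1) * zfact ((j₁ : ℤ) - y.1.1) /
          zfact ((j₁ : ℤ) + j₂ + j₃ + 1)) *
      ((-1 : ℝ) ^ k *
          Real.sqrt (zfact ((j₂ : ℤ) + y.1.2) * zfact ((j₂ : ℤ) - y.1.2) *
            zfact ((j₃ : ℤ) + y.2) * zfact ((j₃ : ℤ) - y.2)) /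
          (zfact k * zfact ((j₁ : ℤ) + y.1.1 - k) * zfact ((j₂ : ℤ) + y.1.2 - k) *
            zfact ((j₁ : ℤ) + j₂ - j₃ - k) * zfact ((j₃ : ℤ) - j₁ - y.1.2 + k) *
            zfact ((j₃ : ℤ) - j₂ - y.1.1 + k))) : ℝ) *
    ((-1 : ℂ) ^ ((j₁ : ℤ) + y.1.1) * (wA j₁ y.1.1 : ℂ) * z₁ ^ ((j₁ : ℤ) + y.1.1) *
      (Real.exp (ρ * j₁) : ℂ)) *
    ((wA j₂ y.1.2 : ℂ) * z₂ ^ ((j₂ : ℤ) - y.1.2) * (Real.exp (ρ * j₂) : ℂ)) *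
    ((wA j₃ y.2 : ℂ) * z₃ ^ ((j₃ : ℤ) - y.2) * (Real.exp (ρ * j₃) : ℂ))

/-- The full summand of the Wilson network at `(m₁, m₂, m₃)`. -/
noncomputable def Ffun (j₁ j₂ j₃ : ℕ) (z₁ z₂ z₃ : ℂ) (ρ : ℝ) (y : (ℤ × ℤ) × ℤ) : ℂ :=
  (wI j₁ j₂ j₃ y.1.1 y.1.2 y.2 : ℂ) *
    ((-1 : ℂ) ^ ((j₁ : ℤ) + y.1.1) * (wA j₁ y.1.1 : ℂ) * z₁ ^ ((j₁ : ℤ) + y.1.1) *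
      (Real.exp (ρ * j₁) : ℂ)) *
    ((wA j₂ y.1.2 : ℂ) * z₂ ^ ((j₂ : ℤ) - y.1.2) * (Real.exp (ρ * j₂) : ℂ)) *
    ((wA j₃ y.2 : ℂ) * z₃ ^ ((j₃ : ℤ) - y.2) * (Real.exp (ρ * j₃) : ℂ))

/-- The `k`-summation range of the intertwiner. -/
noncomputable def Kset (j₁ j₂ j₃ : ℕ) (y : (ℤ × ℤ) × ℤ) : Finset ℤ :=
  Finset.Icc (max 0 (max (y.1.2 + (j₁ : ℤ) - j₃) (y.1.1 + (j₂ : ℤ) - j₃)))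
    (min (y.1.2 + (j₂ : ℤ)) (min (y.1.1 + (j₁ : ℤ)) ((j₁ : ℤ) + j₂ - j₃)))

/-- The combined index set: magnetic labels satisfying the `δ` plus the `k`-range. -/
noncomputable def Sset (j₁ j₂ j₃ : ℕ) : Finset ((_ : (ℤ × ℤ) × ℤ) × ℤ) :=
  (((Finset.Icc (-(j₁ : ℤ)) (j₁ : ℤ) ×ˢ Finset.Icc (-(j₂ : ℤ)) (j₂ : ℤ)) ×ˢ
      Finset.Icc (-(j₃ : ℤ)) (j₃ : ℤ)).filter fun y => y.1.1 = y.1.2 + y.2).sigma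
    (Kset j₁ j₂ j₃)

/-- The per-`(p,q,r)` summand of the expanded correlator. -/
noncomputable def Tfun (j₁ j₂ j₃ a b c : ℕ) (z₁ z₂ z₃ : ℂ) (ρ : ℝ) (x : (ℕ × ℕ) × ℕ) : ℂ :=
  (wC j₁ j₂ j₃ : ℂ) * (Real.exp (ρ * ((j₁ : ℝ) + j₂ + j₃)) : ℂ) *
    (z₁ ^ x.1.1 * (-z₂) ^ (a - x.1.1) * (a.choose x.1.1 : ℂ)) *
    (z₁ ^ x.1.2 * (-z₃) ^ (b - x.1.2) * (b.choose x.1.2 : ℂ)) *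
    (z₂ ^ x.2 * (-z₃) ^ (c - x.2) * (c.choose x.2 : ℂ))

lemma term_eq (j₁ j₂ j₃ a b c : ℕ) (ha : (a : ℤ) = j₁ + j₂ - j₃) (hb : (b : ℤ) = j₁ + j₃ - j₂)
    (hc : (c : ℤ) = j₂ + j₃ - j₁) (m₁ m₂ m₃ k : ℤ) (hm : m₁ = m₂ + m₃)
    (p q r : ℕ) (hp : (p : ℤ) = k) (hq : (q : ℤ) = j₁ + m₁ - k)
    (hr : (r : ℤ) = j₃ - j₁ - m₂ + k)
    (hpa : p ≤ a) (hqb : q ≤ b) (hrc : r ≤ c) (z₁ z₂ z₃ : ℂ) (ρ : ℝ) :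
    Gfun j₁ j₂ j₃ z₁ z₂ z₃ ρ ((m₁, m₂), m₃) k = Tfun j₁ j₂ j₃ a b c z₁ z₂ z₃ ρ ((p, q), r) := by
  simp only [Gfun, Tfun, wA, wC, wΔ]
  rw [zfact_eq (-(j₁:ℤ) + j₂ + j₃) c (by omega),
    zfact_eq ((j₁:ℤ) + j₂ - j₃ - k) (a - p) (by omega),
    zfact_eq ((j₁:ℤ) + j₂ - j₃) a (by omega),
    zfact_eq ((j₁:ℤ) - j₂ + j₃) b (by omega),
    zfact_eq ((j₁:ℤ) + m₁ - k) q (by omega),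
    zfact_eq ((j₁:ℤ) + m₁) (p + q) (by omega),
    zfact_eq ((j₁:ℤ) - m₁) ((a - p) + (b - q)) (by omega),
    zfact_eq ((j₁:ℤ) + j₂ + j₃ + 1) (a + b + c + 1) (by omega),
    zfact_eq ((j₂:ℤ) + m₂ - k) (c - r) (by omega),
    zfact_eq ((j₂:ℤ) + m₂) ((c - r) + p) (by omega),
    zfact_eq ((j₂:ℤ) - m₂) ((a - p) + r) (by omega),
    zfact_eq ((j₃:ℤ) + m₃) (q + r) (by omega),
    zfact_eq ((j₃:ℤ) - m₃) ((b - q) + (c - r)) (by omega),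
    zfact_eq k p (by omega),
    zfact_eq ((j₃:ℤ) - j₁ - m₂ + k) r (by omega),
    zfact_eq ((j₃:ℤ) - j₂ - m₁ + k) (b - q) (by omega),
    zfact_eq (2 * (j₁:ℤ)) (a + b) (by omega),
    zfact_eq (2 * (j₂:ℤ)) (a + c) (by omega),
    zfact_eq (2 * (j₃:ℤ)) (b + c) (by omega),
    zfact_eq ((j₁:ℤ) + j₃ - j₂) b (by omega),
    zfact_eq ((j₂:ℤ) + j₃ - j₁) c (by omega)]
  rw [show ((j₂:ℤ) + m₁ - m₃) = (((c - r) + p : ℕ) : ℤ) by omega,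
    show k = ((p : ℕ) : ℤ) from hp.symm,
    show ((j₁:ℤ) + m₁) = ((p + q : ℕ) : ℤ) by omega,
    show ((j₂:ℤ) - m₂) = (((a - p) + r : ℕ) : ℤ) by omega,
    show ((j₃:ℤ) - m₃) = (((b - q) + (c - r) : ℕ) : ℤ) by omega]
  simp only [zpow_natCast]
  rw [neg_pow z₂ (a - p), neg_pow z₃ (b - q), neg_pow z₃ (c - r)]
  have hsgn : ((-1:ℂ) ^ ((c - r) + p) * (-1:ℂ) ^ p) * (-1:ℂ) ^ (p + q) =
      (-1:ℂ) ^ (a - p) * (-1:ℂ) ^ (b - q) * (-1:ℂ) ^ (c - r) := by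
    rw [← pow_add, ← pow_add, ← pow_add, ← pow_add]
    exact n1pow _ _ (by omega)
  have hexp : Real.exp (ρ * j₁) * Real.exp (ρ * j₂) * Real.exp (ρ * j₃) =
      Real.exp (ρ * ((j₁ : ℝ) + j₂ + j₃)) := by
    rw [← Real.exp_add, ← Real.exp_add]; ring_nf
  have hM := magic a b c p q r hpa hqb hrc
  calc _ = (((-1:ℂ) ^ ((c - r) + p) * (-1:ℂ) ^ p) * (-1:ℂ) ^ (p + q)) *
        (Real.sqrt (((Nat.factorial c) : ℝ) * (Nat.factorial a) * (Nat.factorial b) *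
              (Nat.factorial (p + q)) * (Nat.factorial ((a - p) + (b - q))) /
              (Nat.factorial (a + b + c + 1))) *
          ((Real.sqrt ((Nat.factorial ((c - r) + p)) * (Nat.factorial ((a - p) + r)) *
                (Nat.factorial (q + r)) * (Nat.factorial ((b - q) + (c - r))) : ℝ)) /
            (((Nat.factorial p) : ℝ) * (Nat.factorial q) * (Nat.factorial (c - r)) *
              (Nat.factorial (a - p)) * (Nat.factorial r) * (Nat.factorial (b - q)))) *
          Real.sqrt (((Nat.factorial (a + b)) : ℝ) /
              ((Nat.factorial (p + q)) * (Nat.factorial ((a - p) + (b - q))))) *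
          Real.sqrt (((Nat.factorial (a + c)) : ℝ) /
              (((Nat.factorial ((c - r) + p)) : ℝ) * (Nat.factorial ((a - p) + r)))) *
          Real.sqrt (((Nat.factorial (b + c)) : ℝ) /
              (((Nat.factorial (q + r)) : ℝ) * (Nat.factorial ((b - q) + (c - r))))) : ℝ) *
        (z₁ ^ (p + q) * z₂ ^ ((a - p) + r) * z₃ ^ ((b - q) + (c - r))) *
        ((Real.exp (ρ * j₁) * Real.exp (ρ * j₂) * Real.exp (ρ * j₃) : ℝ) : ℂ) := by
        push_cast
        ring
    _ = ((-1:ℂ) ^ (a - p) * (-1:ℂ) ^ (b - q) * (-1:ℂ) ^ (c - r)) *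
        (Real.sqrt ((((Nat.factorial (a + b)) : ℝ) * (Nat.factorial (a + c)) *
              (Nat.factorial (b + c))) /
              ((Nat.factorial (a + b + c + 1)) * (Nat.factorial a) * (Nat.factorial b) *
                (Nat.factorial c))) *
          (a.choose p) * (b.choose q) * (c.choose r) : ℝ) *
        (z₁ ^ (p + q) * z₂ ^ ((a - p) + r) * z₃ ^ ((b - q) + (c - r))) *
        ((Real.exp (ρ * ((j₁ : ℝ) + j₂ + j₃)) : ℝ) : ℂ) := by
        rw [hsgn, hM, hexp]
    _ = _ := by push_cast; ring
/-- Inverse reindexing map. -/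
def Bwd (j₁ j₃ : ℕ) (x : (ℕ × ℕ) × ℕ) : (_ : (ℤ × ℤ) × ℤ) × ℤ :=
  ⟨(((x.1.1 : ℤ) + x.1.2 - j₁, (j₃ : ℤ) - j₁ + x.1.1 - x.2), (x.1.2 : ℤ) + x.2 - j₃),
    (x.1.1 : ℤ)⟩

/-- The 3-point AdS vertex function: the contracted Wilson network with
lowest/highest-weight cap states reproduces the 3-point conformal correlator. -/
theorem stmt_13 (j₁ j₂ j₃ : ℕ)
    (htri : |(j₁ : ℤ) - j₂| ≤ (j₃ : ℤ) ∧ (j₃ : ℤ) ≤ j₁ + j₂)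
    (z₁ z₂ z₃ : ℂ) (h12 : z₁ ≠ z₂) (h13 : z₁ ≠ z₃) (h23 : z₂ ≠ z₃) (ρ : ℝ) :
    ∑ m₁ ∈ Finset.Icc (-(j₁ : ℤ)) (j₁ : ℤ),
      ∑ m₂ ∈ Finset.Icc (-(j₂ : ℤ)) (j₂ : ℤ),
        ∑ m₃ ∈ Finset.Icc (-(j₃ : ℤ)) (j₃ : ℤ),
          (wI j₁ j₂ j₃ m₁ m₂ m₃ : ℂ) *
            ((-1 : ℂ) ^ ((j₁ : ℤ) + m₁) * (wA j₁ m₁ : ℂ) * z₁ ^ ((j₁ : ℤ) + m₁) *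
              (Real.exp (ρ * j₁) : ℂ)) *
            ((wA j₂ m₂ : ℂ) * z₂ ^ ((j₂ : ℤ) - m₂) * (Real.exp (ρ * j₂) : ℂ)) *
            ((wA j₃ m₃ : ℂ) * z₃ ^ ((j₃ : ℤ) - m₃) * (Real.exp (ρ * j₃) : ℂ)) =
      (wC j₁ j₂ j₃ : ℂ) * (Real.exp (ρ * ((j₁ : ℝ) + j₂ + j₃)) : ℂ) *
        (z₁ - z₂) ^ ((j₁ : ℤ) + j₂ - j₃) * (z₁ - z₃) ^ ((j₁ : ℤ) + j₃ - j₂) *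
        (z₂ - z₃) ^ ((j₂ : ℤ) + j₃ - j₁) := by
  obtain ⟨h1, h2⟩ := htri
  rw [abs_le] at h1
  obtain ⟨a, ha⟩ : ∃ a : ℕ, (a : ℤ) = j₁ + j₂ - j₃ := ⟨((j₁:ℤ) + j₂ - j₃).toNat, by omega⟩
  obtain ⟨b, hb⟩ : ∃ b : ℕ, (b : ℤ) = j₁ + j₃ - j₂ := ⟨((j₁:ℤ) + j₃ - j₂).toNat, by omega⟩
  obtain ⟨c, hc⟩ : ∃ c : ℕ, (c : ℤ) = j₂ + j₃ - j₁ := ⟨((j₂:ℤ) + j₃ - j₁).toNat, by omega⟩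
  have hL : ∑ x ∈ Sset j₁ j₂ j₃, Gfun j₁ j₂ j₃ z₁ z₂ z₃ ρ x.1 x.2 =
      ∑ m₁ ∈ Finset.Icc (-(j₁ : ℤ)) (j₁ : ℤ),
        ∑ m₂ ∈ Finset.Icc (-(j₂ : ℤ)) (j₂ : ℤ),
          ∑ m₃ ∈ Finset.Icc (-(j₃ : ℤ)) (j₃ : ℤ),
            (wI j₁ j₂ j₃ m₁ m₂ m₃ : ℂ) *
              ((-1 : ℂ) ^ ((j₁ : ℤ) + m₁) * (wA j₁ m₁ : ℂ) * z₁ ^ ((j₁ : ℤ) + m₁) *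
                (Real.exp (ρ * j₁) : ℂ)) *
              ((wA j₂ m₂ : ℂ) * z₂ ^ ((j₂ : ℤ) - m₂) * (Real.exp (ρ * j₂) : ℂ)) *
              ((wA j₃ m₃ : ℂ) * z₃ ^ ((j₃ : ℤ) - m₃) * (Real.exp (ρ * j₃) : ℂ)) := by
    calc ∑ x ∈ Sset j₁ j₂ j₃, Gfun j₁ j₂ j₃ z₁ z₂ z₃ ρ x.1 x.2
        = ∑ y ∈ ((Finset.Icc (-(j₁ : ℤ)) (j₁ : ℤ) ×ˢ Finset.Icc (-(j₂ : ℤ)) (j₂ : ℤ)) ×ˢ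
              Finset.Icc (-(j₃ : ℤ)) (j₃ : ℤ)).filter (fun y => y.1.1 = y.1.2 + y.2),
            ∑ k ∈ Kset j₁ j₂ j₃ y, Gfun j₁ j₂ j₃ z₁ z₂ z₃ ρ y k := Finset.sum_sigma _ _ _
      _ = ∑ y ∈ ((Finset.Icc (-(j₁ : ℤ)) (j₁ : ℤ) ×ˢ Finset.Icc (-(j₂ : ℤ)) (j₂ : ℤ)) ×ˢ
              Finset.Icc (-(j₃ : ℤ)) (j₃ : ℤ)).filter (fun y => y.1.1 = y.1.2 + y.2),
            Ffun j₁ j₂ j₃ z₁ z₂ z₃ ρ y := by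
          refine Finset.sum_congr rfl fun y hy => ?_
          have hy2 : y.1.1 = y.1.2 + y.2 := (Finset.mem_filter.mp hy).2
          simp only [Gfun, Ffun, Kset, wI, if_pos hy2]
          push_cast
          simp only [Finset.mul_sum, Finset.sum_mul]
      _ = ∑ y ∈ (Finset.Icc (-(j₁ : ℤ)) (j₁ : ℤ) ×ˢ Finset.Icc (-(j₂ : ℤ)) (j₂ : ℤ)) ×ˢ
              Finset.Icc (-(j₃ : ℤ)) (j₃ : ℤ), Ffun j₁ j₂ j₃ z₁ z₂ z₃ ρ y := by
          refine Finset.sum_filter_of_ne fun y hy hne => ?_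
          by_contra hcon
          exact hne (by simp [Ffun, wI, if_neg hcon])
      _ = _ := by
          simp only [Finset.sum_product]
          simp only [Ffun]

  have hmid : ∑ x ∈ Sset j₁ j₂ j₃, Gfun j₁ j₂ j₃ z₁ z₂ z₃ ρ x.1 x.2 =
      ∑ x ∈ (Finset.range (a + 1) ×ˢ Finset.range (b + 1)) ×ˢ Finset.range (c + 1),
        Tfun j₁ j₂ j₃ a b c z₁ z₂ z₃ ρ x := by
    refine Finset.sum_nbij'
      (fun x => ((x.2.toNat, ((j₁:ℤ) + x.1.1.1 - x.2).toNat),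
        ((j₃:ℤ) - j₁ - x.1.1.2 + x.2).toNat))
      (Bwd j₁ j₃)
      ?_ ?_ ?_ ?_ ?_
    · intro x hx
      simp only [Sset, Kset, Finset.mem_sigma, Finset.mem_filter, Finset.mem_product,
        Finset.mem_Icc, Finset.mem_range] at hx ⊢
      omega
    · intro x hx
      simp only [Sset, Kset, Finset.mem_sigma, Finset.mem_filter, Finset.mem_product,
        Finset.mem_Icc, Finset.mem_range, le_max_iff, max_le_iff, le_min_iff, min_le_iff,
        Bwd] at hx ⊢
      omega
    · intro x hx
      obtain ⟨⟨⟨m₁, m₂⟩, m₃⟩, k⟩ := x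
      simp only [Sset, Kset, Finset.mem_sigma, Finset.mem_filter, Finset.mem_product,
        Finset.mem_Icc] at hx
      refine Sigma.ext ?_ (heq_of_eq ?_)
      · simp only [Bwd, Prod.mk.injEq]
        exact ⟨⟨by omega, by omega⟩, by omega⟩
      · simp only [Bwd]
        omega
    · intro x hx
      obtain ⟨⟨p, q⟩, r⟩ := x
      simp only [Finset.mem_product, Finset.mem_range] at hx
      simp only [Bwd, Prod.mk.injEq]
      refine ⟨⟨?_, ?_⟩, ?_⟩ <;> omega
    · intro x hx
      obtain ⟨⟨⟨m₁, m₂⟩, m₃⟩, k⟩ := x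
      simp only [Sset, Kset, Finset.mem_sigma, Finset.mem_filter, Finset.mem_product,
        Finset.mem_Icc] at hx
      exact term_eq j₁ j₂ j₃ a b c ha hb hc m₁ m₂ m₃ k (by omega) k.toNat
        (((j₁:ℤ) + m₁ - k).toNat) (((j₃:ℤ) - j₁ - m₂ + k).toNat)
        (by omega) (by omega) (by omega) (by omega) (by omega) (by omega) z₁ z₂ z₃ ρ
  have hR : ∑ x ∈ (Finset.range (a + 1) ×ˢ Finset.range (b + 1)) ×ˢ Finset.range (c + 1),
      Tfun j₁ j₂ j₃ a b c z₁ z₂ z₃ ρ x =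
      (wC j₁ j₂ j₃ : ℂ) * (Real.exp (ρ * ((j₁ : ℝ) + j₂ + j₃)) : ℂ) *
        (z₁ - z₂) ^ ((j₁ : ℤ) + j₂ - j₃) * (z₁ - z₃) ^ ((j₁ : ℤ) + j₃ - j₂) *
        (z₂ - z₃) ^ ((j₂ : ℤ) + j₃ - j₁) := by
    rw [← ha, ← hb, ← hc, zpow_natCast, zpow_natCast, zpow_natCast,
      sub_eq_add_neg z₁ z₂, sub_eq_add_neg z₁ z₃, sub_eq_add_neg z₂ z₃,
      add_pow, add_pow, add_pow, mul_assoc, mul_assoc, Finset.sum_mul_sum, Finset.sum_mul_sum]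
    simp only [Finset.mul_sum, Finset.sum_product]
    refine Finset.sum_congr rfl fun p _ => Finset.sum_congr rfl fun q _ =>
      Finset.sum_congr rfl fun r _ => ?_
    simp only [Tfun]
    ring
  exact hL.symm.trans (hmid.trans hR)
end

section
/- Let V be a finite-dimensional real normed vector space and let J₋₁, J₀, J₁ be linear endomorphisms of V satisfying the sl(2) commutation relations [J₀, J₁] = −J₁, [J₀, J₋₁] = J₋₁, and [J₁, J₋₁] = 2J₀. Let a ∈ V and define F : ℝ × ℝ → V by F(ρ, z) := exp(z·J₁)(exp(ρ·J₀) a). Then: (i) ∂_z F = J₁ F and ∂_ρ F − z·∂_z F = J₀ F (for any a); and (ii) if moreover (J₁ + J₋₁) a = 0, then z²·∂_z F − 2z·∂_ρ F − e^{−2ρ}·∂_z F = J₋₁ F. -/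
open NormedSpace

section aux
variable {A : Type*} [NormedRing A] [NormedAlgebra ℝ A] [CompleteSpace A]

private lemma const_of_deriv_zero {E : Type*} [NormedAddCommGroup E] [NormedSpace ℝ E]
    {f : ℝ → E} (h : ∀ t : ℝ, HasDerivAt f 0 t) : f 1 = f 0 :=
  is_const_of_deriv_eq_zero (fun t => (h t).differentiableAt) (fun t => (h t).deriv) 1 0

private lemma exp_conj_right (X Y B C : A) (hB : X * Y - Y * X = B)
    (hC : X * B - B * X = C) (h0 : X * C = C * X) :
    exp X * Y = (Y + B + (1 / 2 : ℝ) • C) * exp X := by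
  have comX : ∀ t : ℝ, Commute X (exp (t • X)) :=
    fun t => ((Commute.refl X).smul_right t).exp_right
  set P : ℝ → A := fun t => Y + t • B + (t ^ 2 / 2) • C with hP
  have e1 : X * Y = Y * X + B := by rw [← hB]; noncomm_ring
  have e2 : X * B = B * X + C := by rw [← hC]; noncomm_ring
  have hkey : ∀ t : ℝ, X * P t = P t * X + (B + t • C) := by
    intro t
    simp only [hP, mul_add, add_mul, mul_smul_comm, smul_mul_assoc, e1, e2, h0, smul_add]
    abel
  have hPd : ∀ t : ℝ, HasDerivAt P (B + t • C) t := by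
    intro t
    have h1 : HasDerivAt (fun s : ℝ => s • B) ((1 : ℝ) • B) t :=
      (hasDerivAt_id t).smul_const B
    have h2 : HasDerivAt (fun s : ℝ => (s ^ 2 / 2) • C) ((2 * t ^ 1 / 2) • C) t :=
      ((hasDerivAt_pow 2 t).div_const 2).smul_const C
    rw [show (2 * t ^ 1 / 2 : ℝ) = t by ring] at h2
    have := ((hasDerivAt_const t Y).add h1).add h2
    simpa [hP, Pi.add_def] using this
  have hH : ∀ t : ℝ, HasDerivAt (fun t : ℝ => exp (t • (-X)) * P t * exp (t • X)) 0 t := by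
    intro t
    have hE : HasDerivAt (fun t : ℝ => exp (t • (-X))) (exp (t • (-X)) * (-X)) t :=
      hasDerivAt_exp_smul_const (-X) t
    have hG : HasDerivAt (fun t : ℝ => exp (t • X)) (exp (t • X) * X) t :=
      hasDerivAt_exp_smul_const X t
    have h := (hE.mul (hPd t)).mul hG
    simp only [Pi.mul_def] at h
    convert h using 1
    rw [(comX t).symm.eq]
    have hk : B + t • C = X * P t - P t * X := by rw [hkey t]; abel
    rw [hk]
    noncomm_ring
  have h10 := const_of_deriv_zero hH
  simp only [one_smul, zero_smul, exp_zero, one_mul, mul_one, hP] at h10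
  norm_num at h10
  have hinv : exp X * exp (-X) = 1 := by
    rw [← exp_add_of_commute_of_mem_ball (𝕂 := ℝ) (Commute.refl X).neg_right
      ((expSeries_radius_eq_top ℝ A).symm ▸ edist_lt_top _ _)
      ((expSeries_radius_eq_top ℝ A).symm ▸ edist_lt_top _ _)]
    simp [exp_zero]
  calc exp X * Y = exp X * (exp (-X) * (Y + B + (1 / 2 : ℝ) • C) * exp X) := by
        rw [h10]
    _ = (exp X * exp (-X)) * (Y + B + (1 / 2 : ℝ) • C) * exp X := by
        rw [← mul_assoc, ← mul_assoc]
    _ = (Y + B + (1 / 2 : ℝ) • C) * exp X := by rw [hinv, one_mul]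


private lemma exp_conj_left (X Y B C : A) (hB : X * Y - Y * X = B)
    (hC : X * B - B * X = C) (h0 : X * C = C * X) :
    Y * exp X = exp X * (Y - B + (1 / 2 : ℝ) • C) := by
  have comX : ∀ t : ℝ, Commute (-X) (exp (t • (-X))) :=
    fun t => ((Commute.refl (-X)).smul_right t).exp_right
  set P : ℝ → A := fun t => Y - t • B + (t ^ 2 / 2) • C with hP
  have e1 : X * Y = Y * X + B := by rw [← hB]; noncomm_ring
  have e2 : X * B = B * X + C := by rw [← hC]; noncomm_ring
  have hkey : ∀ t : ℝ, X * P t = P t * X + (B - t • C) := by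
    intro t
    simp only [hP, mul_add, add_mul, mul_sub, sub_mul, mul_smul_comm, smul_mul_assoc,
      e1, e2, h0, smul_add]
    abel
  have hPd : ∀ t : ℝ, HasDerivAt P (-B + t • C) t := by
    intro t
    have h1 : HasDerivAt (fun s : ℝ => s • B) ((1 : ℝ) • B) t :=
      (hasDerivAt_id t).smul_const B
    have h2 : HasDerivAt (fun s : ℝ => (s ^ 2 / 2) • C) ((2 * t ^ 1 / 2) • C) t :=
      ((hasDerivAt_pow 2 t).div_const 2).smul_const C
    rw [show (2 * t ^ 1 / 2 : ℝ) = t by ring] at h2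
    have := ((hasDerivAt_const t Y).sub h1).add h2
    simpa [hP, Pi.add_def, Pi.sub_def] using this
  have hH : ∀ t : ℝ, HasDerivAt (fun t : ℝ => exp (t • X) * P t * exp (t • (-X))) 0 t := by
    intro t
    have hE : HasDerivAt (fun t : ℝ => exp (t • (-X))) (exp (t • (-X)) * (-X)) t :=
      hasDerivAt_exp_smul_const (-X) t
    have hG : HasDerivAt (fun t : ℝ => exp (t • X)) (exp (t • X) * X) t :=
      hasDerivAt_exp_smul_const X t
    have h := (hG.mul (hPd t)).mul hE
    simp only [Pi.mul_def] at h
    convert h using 1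
    rw [(comX t).symm.eq]
    have hk : B - t • C = X * P t - P t * X := by rw [hkey t]; abel
    have hk' : -B + t • C = P t * X - X * P t := by rw [hkey t]; abel
    rw [hk']
    noncomm_ring
  have h10 := const_of_deriv_zero hH
  simp only [one_smul, zero_smul, exp_zero, one_mul, mul_one, hP] at h10
  norm_num at h10
  have hinv : exp (-X) * exp X = 1 := by
    rw [← exp_add_of_commute_of_mem_ball (𝕂 := ℝ) (Commute.refl X).neg_left
      ((expSeries_radius_eq_top ℝ A).symm ▸ edist_lt_top _ _)
      ((expSeries_radius_eq_top ℝ A).symm ▸ edist_lt_top _ _)]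
    simp [exp_zero]
  calc Y * exp X = exp X * (Y - B + (1 / 2 : ℝ) • C) * exp (-X) * exp X := by
        rw [h10]
    _ = exp X * (Y - B + (1 / 2 : ℝ) • C) * (exp (-X) * exp X) := by
        rw [mul_assoc]
    _ = exp X * (Y - B + (1 / 2 : ℝ) • C) := by rw [hinv, mul_one]

private lemma exp_conj_smul (X Y : A) (c : ℝ) (h : X * Y - Y * X = c • Y) :
    exp X * Y = Real.exp c • (Y * exp X) := by
  have comX : ∀ t : ℝ, Commute X (exp (t • X)) :=
    fun t => ((Commute.refl X).smul_right t).exp_right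
  have hH : ∀ t : ℝ, HasDerivAt
      (fun t : ℝ => Real.exp (t * c) • (exp (t • (-X)) * Y * exp (t • X))) 0 t := by
    intro t
    have hs : HasDerivAt (fun t : ℝ => Real.exp (t * c)) (Real.exp (t * c) * c) t := by
      simpa [Function.comp_def] using (Real.hasDerivAt_exp (t * c)).comp t (hasDerivAt_mul_const c)
    have hE : HasDerivAt (fun t : ℝ => exp (t • (-X))) (exp (t • (-X)) * (-X)) t :=
      hasDerivAt_exp_smul_const (-X) t
    have hG : HasDerivAt (fun t : ℝ => exp (t • X)) (exp (t • X) * X) t :=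
      hasDerivAt_exp_smul_const X t
    have hconj := (hE.mul (hasDerivAt_const t Y)).mul hG
    have h2 : HasDerivAt (fun t : ℝ => Real.exp (t * c) • (exp (t • (-X)) * Y * exp (t • X))) _ t :=
      hs.smul hconj
    simp only [Pi.mul_def, Pi.smul_def'] at h2
    convert h2 using 1
    rw [(comX t).symm.eq]
    have hyx : Y * X = X * Y - c • Y := by rw [← h]; abel
    have key : (exp (t • (-X)) * (-X) * Y + exp (t • (-X)) * 0) * exp (t • X) +
        exp (t • (-X)) * Y * (X * exp (t • X)) =
        (-c) • (exp (t • (-X)) * Y * exp (t • X)) := by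
      have : exp (t • (-X)) * (-X) * Y + exp (t • (-X)) * 0 +
          exp (t • (-X)) * (Y * X) = exp (t • (-X)) * (Y * X - X * Y) := by noncomm_ring
      calc (exp (t • (-X)) * (-X) * Y + exp (t • (-X)) * 0) * exp (t • X) +
            exp (t • (-X)) * Y * (X * exp (t • X))
          = (exp (t • (-X)) * (Y * X - X * Y)) * exp (t • X) := by
            rw [← this]; noncomm_ring
        _ = (exp (t • (-X)) * ((-c) • Y)) * exp (t • X) := by
            rw [show Y * X - X * Y = (-c) • Y by rw [hyx]; module]
        _ = (-c) • (exp (t • (-X)) * Y * exp (t • X)) := by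
            rw [mul_smul_comm, smul_mul_assoc]
    rw [key, smul_smul]
    module
  have h10 := const_of_deriv_zero hH
  simp only [one_smul, zero_smul, exp_zero, one_mul, mul_one, zero_mul, Real.exp_zero] at h10
  -- h10 : Real.exp c • (exp (-X) * Y * exp X) = Y
  have hinv : exp X * exp (-X) = 1 := by
    rw [← exp_add_of_commute_of_mem_ball (𝕂 := ℝ) (Commute.refl X).neg_right
      ((expSeries_radius_eq_top ℝ A).symm ▸ edist_lt_top _ _)
      ((expSeries_radius_eq_top ℝ A).symm ▸ edist_lt_top _ _)]
    simp [exp_zero]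
  calc exp X * Y = exp X * (Real.exp c • (exp (-X) * Y * exp X)) := by rw [h10]
    _ = Real.exp c • (exp X * (exp (-X) * Y * exp X)) := by rw [mul_smul_comm]
    _ = Real.exp c • ((exp X * exp (-X)) * Y * exp X) := by rw [← mul_assoc, ← mul_assoc]
    _ = Real.exp c • (Y * exp X) := by rw [hinv, one_mul]

end aux

set_option maxHeartbeats 1000000 in
set_option synthInstance.maxHeartbeats 400000 in
/-- The bulk cap-state computation: for `F (ρ, z) = exp (z • J₁) (exp (ρ • J₀) a)` one has
`∂_z F = J₁ F` and `∂_ρ F - z ∂_z F = J₀ F`; if moreover `(J₁ + J₋₁) a = 0`, then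
`z² ∂_z F - 2z ∂_ρ F - e^{-2ρ} ∂_z F = J₋₁ F`. -/
theorem stmt_17 (V : Type*) [NormedAddCommGroup V] [NormedSpace ℝ V]
    [FiniteDimensional ℝ V]
    (Jm J0 J1 : V →L[ℝ] V)
    (h01 : J0 * J1 - J1 * J0 = -J1)
    (h0m : J0 * Jm - Jm * J0 = Jm)
    (h1m : J1 * Jm - Jm * J1 = (2 : ℝ) • J0)
    (a : V) (F : ℝ → ℝ → V)
    (hF : ∀ ρ z : ℝ, F ρ z = NormedSpace.exp (z • J1) (NormedSpace.exp (ρ • J0) a)) :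
    ((∀ ρ z : ℝ, HasDerivAt (fun w => F ρ w) (J1 (F ρ z)) z) ∧
      (∀ ρ z : ℝ, deriv (fun r => F r z) ρ - z • deriv (fun w => F ρ w) z = J0 (F ρ z))) ∧
    ((J1 + Jm) a = 0 →
      ∀ ρ z : ℝ,
        z ^ 2 • deriv (fun w => F ρ w) z - (2 * z) • deriv (fun r => F r z) ρ -
            Real.exp (-2 * ρ) • deriv (fun w => F ρ w) z = Jm (F ρ z)) := by
  -- commutator rearrangements
  have h10 : J1 * J0 - J0 * J1 = J1 := by rw [← neg_sub, h01, neg_neg]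
  -- derivative in z
  have hD1 : ∀ ρ z : ℝ, HasDerivAt (fun w => F ρ w) (J1 (F ρ z)) z := by
    intro ρ z
    have h1 : HasDerivAt (fun w : ℝ => exp (w • J1)) (J1 * exp (z • J1)) z :=
      hasDerivAt_exp_smul_const' J1 z
    have h2 := h1.clm_apply (hasDerivAt_const z (exp (ρ • J0) a))
    simp only [map_zero, add_zero] at h2
    have hfun : (fun w => F ρ w) = fun w => exp (w • J1) (exp (ρ • J0) a) :=
      funext fun w => hF ρ w
    rw [hfun]
    convert h2 using 1
    simp [hF, ContinuousLinearMap.mul_apply]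
  -- derivative in ρ
  have hD2 : ∀ ρ z : ℝ, HasDerivAt (fun r => F r z)
      ((exp (z • J1) * (J0 * exp (ρ • J0))) a) ρ := by
    intro ρ z
    have h1 : HasDerivAt (fun r : ℝ => exp (r • J0)) (J0 * exp (ρ • J0)) ρ :=
      hasDerivAt_exp_smul_const' J0 ρ
    have h2 := h1.clm_apply (hasDerivAt_const ρ a)
    simp only [map_zero, add_zero] at h2
    have h3 := (exp (z • J1)).hasFDerivAt.comp_hasDerivAt ρ h2
    have hfun : (fun r => F r z) = fun r => exp (z • J1) (exp (r • J0) a) :=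
      funext fun r => hF r z
    rw [hfun]
    exact h3
  -- conjugation identity c1 : exp(z•J1) * J0 = (J0 + z•J1) * exp(z•J1)
  have c1 : ∀ z : ℝ, exp (z • J1) * J0 = (J0 + z • J1) * exp (z • J1) := by
    intro z
    have hB : (z • J1) * J0 - J0 * (z • J1) = z • J1 := by
      rw [smul_mul_assoc, mul_smul_comm, ← smul_sub, h10]
    have hC : (z • J1) * (z • J1) - (z • J1) * (z • J1) = (0 : V →L[ℝ] V) := sub_self _
    have := exp_conj_right (z • J1) J0 (z • J1) 0 hB hC (by simp)
    simpa using this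
  -- c2 : Jm * exp(z•J1) = exp(z•J1) * (Jm - (2*z)•J0 + (z^2)•J1)
  have c2 : ∀ z : ℝ, Jm * exp (z • J1) =
      exp (z • J1) * (Jm - (2 * z) • J0 + (z ^ 2) • J1) := by
    intro z
    have hB : (z • J1) * Jm - Jm * (z • J1) = (2 * z) • J0 := by
      rw [smul_mul_assoc, mul_smul_comm, ← smul_sub, h1m, smul_smul, mul_comm]
    have hC : (z • J1) * ((2 * z) • J0) - ((2 * z) • J0) * (z • J1) = (2 * z ^ 2) • J1 := by
      rw [smul_mul_assoc, mul_smul_comm, smul_mul_assoc, mul_smul_comm, smul_smul, smul_smul,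
        show z * (2 * z) = 2 * z ^ 2 by ring, show 2 * z * z = 2 * z ^ 2 by ring,
        ← smul_sub, h10]
    have h0 : (z • J1) * ((2 * z ^ 2) • J1) = ((2 * z ^ 2) • J1) * (z • J1) := by
      rw [smul_mul_assoc, mul_smul_comm, smul_mul_assoc, mul_smul_comm, smul_smul, smul_smul,
        mul_comm z (2 * z ^ 2)]
    have := exp_conj_left (z • J1) Jm ((2 * z) • J0) ((2 * z ^ 2) • J1) hB hC h0
    rw [this]
    congr 1
    rw [smul_smul]
    congr 2
    ring
  -- c3 : exp(ρ•J0) * J1 = e^{-ρ} • (J1 * exp(ρ•J0))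
  have c3 : ∀ ρ : ℝ, exp (ρ • J0) * J1 = Real.exp (-ρ) • (J1 * exp (ρ • J0)) := by
    intro ρ
    refine exp_conj_smul (ρ • J0) J1 (-ρ) ?_
    rw [smul_mul_assoc, mul_smul_comm, ← smul_sub, h01]
    module
  -- c4 : exp(ρ•J0) * Jm = e^{ρ} • (Jm * exp(ρ•J0))
  have c4 : ∀ ρ : ℝ, exp (ρ • J0) * Jm = Real.exp ρ • (Jm * exp (ρ • J0)) := by
    intro ρ
    refine exp_conj_smul (ρ • J0) Jm ρ ?_
    rw [smul_mul_assoc, mul_smul_comm, ← smul_sub, h0m]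
  -- part 1b value
  have hval : ∀ ρ z : ℝ, (exp (z • J1) * (J0 * exp (ρ • J0))) a
      = J0 (F ρ z) + z • J1 (F ρ z) := by
    intro ρ z
    have hop : exp (z • J1) * (J0 * exp (ρ • J0))
        = (J0 + z • J1) * (exp (z • J1) * exp (ρ • J0)) := by
      rw [← mul_assoc, c1 z, mul_assoc]
    rw [hop]
    simp [hF, ContinuousLinearMap.mul_apply, ContinuousLinearMap.add_apply,
      ContinuousLinearMap.smul_apply]
  refine ⟨⟨hD1, ?_⟩, ?_⟩
  · intro ρ z
    rw [(hD1 ρ z).deriv, (hD2 ρ z).deriv, hval]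
    abel
  · intro hcap ρ z
    have hJma : Jm a = -(J1 a) := by
      have h' : J1 a + Jm a = 0 := by
        simpa [ContinuousLinearMap.add_apply] using hcap
      exact eq_neg_of_add_eq_zero_right h'
    -- Jm (exp(ρ•J0) a) = -e^{-2ρ} • J1 (exp(ρ•J0) a)
    have hm0 : Jm (exp (ρ • J0) a) = -(Real.exp (-2 * ρ) • J1 (exp (ρ • J0) a)) := by
      have h4' : Jm * exp (ρ • J0) = Real.exp (-ρ) • (exp (ρ • J0) * Jm) := by
        rw [c4 ρ, smul_smul, ← Real.exp_add]
        norm_num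
      have step1 : Jm (exp (ρ • J0) a) = Real.exp (-ρ) • (exp (ρ • J0)) (Jm a) := by
        have := congrArg (fun T : V →L[ℝ] V => T a) h4'
        simpa [ContinuousLinearMap.mul_apply, ContinuousLinearMap.smul_apply] using this
      have step2 : (exp (ρ • J0)) (J1 a) = Real.exp (-ρ) • J1 ((exp (ρ • J0)) a) := by
        have := congrArg (fun T : V →L[ℝ] V => T a) (c3 ρ)
        simpa [ContinuousLinearMap.mul_apply, ContinuousLinearMap.smul_apply] using this
      rw [step1, hJma, map_neg, step2, smul_neg, smul_smul, ← Real.exp_add,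
        show (-ρ + -ρ : ℝ) = -2 * ρ by ring]
    -- commute J1 with exp(z•J1)
    have comJ1 : exp (z • J1) * J1 = J1 * exp (z • J1) :=
      (((Commute.refl J1).smul_left z).exp_left).eq
    -- main computation
    have hmain : Jm (F ρ z) = z ^ 2 • J1 (F ρ z)
        - (2 * z) • ((exp (z • J1) * (J0 * exp (ρ • J0))) a)
        - Real.exp (-2 * ρ) • J1 (F ρ z) := by
      have hop : Jm * (exp (z • J1) * exp (ρ • J0))
          = exp (z • J1) * ((Jm - (2 * z) • J0 + (z ^ 2) • J1) * exp (ρ • J0)) := by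
        rw [← mul_assoc, c2 z, mul_assoc]
      have happ := congrArg (fun T : V →L[ℝ] V => T a) hop
      simp only [ContinuousLinearMap.mul_apply, ContinuousLinearMap.sub_apply,
        ContinuousLinearMap.add_apply, ContinuousLinearMap.smul_apply] at happ
      have hJ1comm : exp (z • J1) (J1 (exp (ρ • J0) a))
          = J1 (exp (z • J1) (exp (ρ • J0) a)) := by
        have := congrArg (fun T : V →L[ℝ] V => T (exp (ρ • J0) a)) comJ1
        simpa [ContinuousLinearMap.mul_apply] using this
      have hρval : exp (z • J1) (J0 (exp (ρ • J0) a))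
          = (exp (z • J1) * (J0 * exp (ρ • J0))) a := by
        simp [ContinuousLinearMap.mul_apply]
      rw [hF ρ z, happ]
      simp only [map_add, map_sub, map_smul, map_neg, hm0, hJ1comm, hρval]
      abel
    rw [(hD1 ρ z).deriv, (hD2 ρ z).deriv, hmain]
end
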